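/- arXiv:1708.03099 — 12 statements merged into one kernel-verified Lean document; each statement's English description precedes it below -/
import Mathlib

section
/- Let X be a càdlàg adapted real-valued process and let T be a strictly positive, finite-valued stopping time admitting an announcing sequence (ρ_n). Assume ΔX_T ≠ 0 a.s. and that the event {ΔX_T > 0} belongs to the σ-algebra ⋁_n 𝓕_{ρ_n}. Set σ_n := ρ_n ∧ n and τ_n := T ∧ n. Then there exist random variables ξ_n, each 𝓕_{σ_n}-measurable with |ξ_n| ≤ 1 a.s., such that ξ_n → 1_{ΔX_T>0} − 1_{ΔX_T≤0} a.s. and, for every t ≥ 0, ξ_n·(X_{τ_n∧t} − X_{σ_n∧t}) → |ΔX_T|·1_{T≤t} a.s. as n → ∞; in particular the limiting profit |ΔX_T| is strictly positive a.s. (a predictable jump yields a sure profit via a flash strategy). -/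
open MeasureTheory Filter Set
open scoped NNReal Topology

/-- A predictable jump yields a sure profit via a flash strategy:
if `T` is a strictly positive (finite-valued) stopping time with announcing sequence `ρ`,
the jump `ΔX_T = X_T - X_{T-}` is a.s. nonzero and the event `{ΔX_T > 0}` is
`⋁ₙ 𝓕_{ρₙ}`-measurable, then setting `σₙ := ρₙ ∧ n`, `τₙ := T ∧ n`, there are
`𝓕_{σₙ}`-measurable positions `ξₙ` with `|ξₙ| ≤ 1` converging a.s. to
`1_{ΔX_T>0} - 1_{ΔX_T≤0}`, whose buy-and-hold gains converge a.s. to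
`|ΔX_T|·1_{T≤t}` for every `t ≥ 0`; the limiting profit `|ΔX_T|` is a.s. strictly
positive. -/
theorem stmt0
    {Ω : Type*} {m : MeasurableSpace Ω} {P : Measure Ω} [IsProbabilityMeasure P]
    (F : Filtration ℝ≥0 m)
    (X Xm : ℝ≥0 → Ω → ℝ)
    (hadapted : Adapted F X)
    -- càdlàg paths: right-continuity and existence of (finite) left limits `Xm`
    (hrc : ∀ ω, ∀ t : ℝ≥0, Tendsto (fun s => X s ω) (𝓝[>] t) (𝓝 (X t ω)))
    (hll : ∀ ω, ∀ t : ℝ≥0, 0 < t → Tendsto (fun s => X s ω) (𝓝[<] t) (𝓝 (Xm t ω)))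
    (T : Ω → ℝ≥0) (hT : IsStoppingTime F (fun ω => (T ω : WithTop ℝ≥0)))
    (hTpos : ∀ᵐ ω ∂P, 0 < T ω)
    -- announcing sequence for `T`
    (ρ : ℕ → Ω → ℝ≥0) (hρ : ∀ n, IsStoppingTime F (fun ω => (ρ n ω : WithTop ℝ≥0)))
    (hρmono : ∀ n, ∀ ω, ρ n ω ≤ ρ (n + 1) ω)
    (hρlt : ∀ᵐ ω ∂P, ∀ n, ρ n ω < T ω)
    (hρlim : ∀ᵐ ω ∂P, Tendsto (fun n => ρ n ω) atTop (𝓝 (T ω)))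
    -- the jump at `T` is a.s. nonzero
    (hjump : ∀ᵐ ω ∂P, X (T ω) ω - Xm (T ω) ω ≠ 0)
    -- the event `{ΔX_T > 0}` is `⋁ₙ 𝓕_{ρₙ}`-measurable
    (hpred : MeasurableSet[⨆ n, (hρ n).measurableSpace]
      {ω | 0 < X (T ω) ω - Xm (T ω) ω}) :
    ∃ ξ : ℕ → Ω → ℝ,
      (∀ n, Measurable[((hρ n).min_const (n : ℝ≥0)).measurableSpace] (ξ n)) ∧
      (∀ n, ∀ᵐ ω ∂P, |ξ n ω| ≤ 1) ∧
      (∀ᵐ ω ∂P, Tendsto (fun n => ξ n ω) atTop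
        (𝓝 ((if 0 < X (T ω) ω - Xm (T ω) ω then (1 : ℝ) else 0)
          - (if X (T ω) ω - Xm (T ω) ω ≤ 0 then (1 : ℝ) else 0)))) ∧
      (∀ t : ℝ≥0, ∀ᵐ ω ∂P,
        Tendsto (fun n =>
            ξ n ω * (X (min (min (T ω) (n : ℝ≥0)) t) ω
              - X (min (min (ρ n ω) (n : ℝ≥0)) t) ω)) atTop
          (𝓝 (|X (T ω) ω - Xm (T ω) ω| * (if T ω ≤ t then (1 : ℝ) else 0)))) ∧
      (∀ᵐ ω ∂P, 0 < |X (T ω) ω - Xm (T ω) ω|) := by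
  classical
  have hmono : ∀ ω, Monotone fun n => ρ n ω := fun ω =>
    monotone_nat_of_le_succ fun n => hρmono n ω
  set A : Set Ω := {ω | 0 < X (T ω) ω - Xm (T ω) ω} with hA
  set f : Ω → ℝ := fun ω => A.indicator (fun _ => (1 : ℝ)) ω - Aᶜ.indicator (fun _ => 1) ω
    with hfdef
  -- the discrete filtration `𝒢 n = 𝓕_{ρₙ ∧ n}`
  set 𝒢 : Filtration ℕ m :=
    ⟨fun n => ((hρ n).min_const (n : ℝ≥0)).measurableSpace,
      fun i j hij => IsStoppingTime.measurableSpace_mono _ _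
        (fun ω => min_le_min (WithTop.coe_le_coe.mpr (hmono ω hij)) (WithTop.coe_le_coe.mpr (by exact_mod_cast hij))),
      fun n => ((hρ n).min_const (n : ℝ≥0)).measurableSpace_le⟩ with h𝒢
  have hsub : ∀ k, (hρ k).measurableSpace ≤ ⨆ n, 𝒢 n := by
    intro k s hs
    have hs' : s = ⋃ j : ℕ, s ∩ {ω | ρ k ω ≤ (j : ℝ≥0)} := by
      ext ω
      simp only [Set.mem_iUnion, Set.mem_inter_iff, Set.mem_setOf_eq]
      exact ⟨fun h => (exists_nat_ge (ρ k ω)).imp fun j hj => ⟨h, hj⟩, fun ⟨j, h, _⟩ => h⟩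
    rw [hs']
    refine MeasurableSet.iUnion fun j => ?_
    have h1 : MeasurableSet[((hρ k).min_const (j : ℝ≥0)).measurableSpace]
        (s ∩ {ω | ρ k ω ≤ (j : ℝ≥0)}) := by
      have hset : {ω | ρ k ω ≤ (j : ℝ≥0)} =
          {ω | ((ρ k ω : WithTop ℝ≥0)) ≤ ((j : ℝ≥0) : WithTop ℝ≥0)} :=
        Set.ext fun ω => (WithTop.coe_le_coe (b := ρ k ω) (a := (j : ℝ≥0))).symm
      rw [hset, ← IsStoppingTime.measurableSet_inter_le_const_iff]
      exact hs.inter ((hρ k).measurableSet_le' _)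
    have h2 : ((hρ k).min_const (j : ℝ≥0)).measurableSpace ≤ 𝒢 (max k j) := by
      refine IsStoppingTime.measurableSpace_mono _ ((hρ (max k j)).min_const _) fun ω => ?_
      exact min_le_min (WithTop.coe_le_coe.mpr (hmono ω (le_max_left _ _))) (WithTop.coe_le_coe.mpr (by exact_mod_cast le_max_right k j))
    exact le_iSup (fun n => (𝒢 n : MeasurableSpace Ω)) (max k j) _ (h2 _ h1)
  have hAmeas : MeasurableSet[⨆ n, 𝒢 n] A := (iSup_le hsub) _ hpred
  have hfm : StronglyMeasurable[⨆ n, 𝒢 n] f :=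
    (stronglyMeasurable_const.indicator hAmeas).sub
      (stronglyMeasurable_const.indicator hAmeas.compl)
  have hle : (⨆ n, (𝒢 n : MeasurableSpace Ω)) ≤ m := iSup_le fun n => 𝒢.le n
  have hfbd : ∀ ω, |f ω| ≤ 1 := by
    intro ω
    by_cases h : ω ∈ A <;>
      simp [hfdef, Set.indicator_apply, h]
  have hfint : Integrable f P := by
    refine Integrable.mono' (integrable_const (1 : ℝ))
      ((hfm.mono hle).aestronglyMeasurable) (ae_of_all _ hfbd)
  refine ⟨fun n => P[f|𝒢 n], fun n => stronglyMeasurable_condExp.measurable, ?_, ?_, ?_, ?_⟩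
  · intro n
    have := ae_bdd_condExp_of_ae_bdd (m := 𝒢 n) (μ := P) (R := 1) (ae_of_all _ (by
      intro ω; simpa using hfbd ω))
    simpa using this
  · have hconv := hfint.tendsto_ae_condExp hfm
    filter_upwards [hconv] with ω hω
    convert hω using 2
    by_cases h : ω ∈ A
    · have h' : 0 < X (T ω) ω - Xm (T ω) ω := h
      simp [hfdef, Set.indicator_apply, h, h', not_le.mpr h']
    · have h' : ¬ 0 < X (T ω) ω - Xm (T ω) ω := h
      simp [hfdef, Set.indicator_apply, h, h', not_lt.mp h']
  · intro t
    filter_upwards [hρlt, hρlim, hjump, hTpos, hfint.tendsto_ae_condExp hfm] with ω hlt hlim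
      hj hpos hconv
    by_cases hTt : T ω ≤ t
    · rw [if_pos hTt, mul_one]
      obtain ⟨N, hN⟩ := exists_nat_ge (T ω)
      have hXρ : Tendsto (fun n => X (ρ n ω) ω) atTop (𝓝 (Xm (T ω) ω)) :=
        (hll ω (T ω) hpos).comp
          (tendsto_nhdsWithin_iff.2 ⟨hlim, Eventually.of_forall fun n => hlt n⟩)
      have hmain : Tendsto (fun n => (P[f|𝒢 n]) ω * (X (T ω) ω - X (ρ n ω) ω)) atTop
          (𝓝 (f ω * (X (T ω) ω - Xm (T ω) ω))) :=
        hconv.mul (tendsto_const_nhds.sub hXρ)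
      have hval : f ω * (X (T ω) ω - Xm (T ω) ω) = |X (T ω) ω - Xm (T ω) ω| := by
        rcases lt_or_gt_of_ne hj with hD | hD
        · have h' : ω ∉ A := not_lt.mpr hD.le
          rw [abs_of_neg hD]
          simp [hfdef, Set.indicator_apply, h']
        · have h' : ω ∈ A := hD
          rw [abs_of_pos hD]
          simp [hfdef, Set.indicator_apply, h']
      rw [← hval]
      refine hmain.congr' ?_
      filter_upwards [eventually_ge_atTop N] with n hn
      have hTn : T ω ≤ (n : ℝ≥0) := hN.trans (by exact_mod_cast hn)
      have h1 : min (min (T ω) (n : ℝ≥0)) t = T ω := by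
        rw [min_eq_left hTn, min_eq_left hTt]
      have h2 : min (min (ρ n ω) (n : ℝ≥0)) t = ρ n ω := by
        rw [min_eq_left ((hlt n).le.trans hTn), min_eq_left ((hlt n).le.trans hTt)]
      rw [h1, h2]
    · rw [if_neg hTt, mul_zero]
      have ht : t < T ω := not_le.1 hTt
      obtain ⟨N, hN⟩ := exists_nat_ge t
      have hev1 : ∀ᶠ n in atTop, t < ρ n ω := hlim.eventually (eventually_gt_nhds ht)
      refine Tendsto.congr' ?_ tendsto_const_nhds
      filter_upwards [eventually_ge_atTop N, hev1] with n hn hρn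
      have htn : t ≤ (n : ℝ≥0) := hN.trans (by exact_mod_cast hn)
      have h1 : min (min (T ω) (n : ℝ≥0)) t = t := min_eq_right (le_min ht.le htn)
      have h2 : min (min (ρ n ω) (n : ℝ≥0)) t = t := min_eq_right (le_min hρn.le htn)
      rw [h1, h2, sub_self, mul_zero]
  · filter_upwards [hjump] with ω hω using abs_pos.mpr hω
end

section
/- Let X be a càdlàg adapted real-valued process with respect to a filtration satisfying the usual conditions, and let T be a strictly positive, finite-valued stopping time admitting an announcing sequence (ρ_n). Assume ΔX_T ≠ 0 a.s. and that the random variable ΔX_T is measurable with respect to ⋁_n 𝓕_{ρ_n}. Let k ≥ 1 be such that the event A := {1/k ≤ |ΔX_T| ≤ k} has P(A) > 0. Then there exist bounded stopping times σ_n ≤ τ_n and 𝓕_{σ_n}-measurable random variables ξ_n with |ξ_n| ≤ k a.s., such that (ξ_n) converges a.s. and, for every t ≥ 0, ξ_n·(X_{τ_n∧t} − X_{σ_n∧t}) → 1_A·1_{T≤t} a.s. as n → ∞ (a fully predictable jump yields a constant profit via a flash strategy). -/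
open MeasureTheory Filter Set
open scoped NNReal Topology

/-- A fully predictable jump yields a constant profit via a flash
strategy: if the filtration satisfies the usual conditions, `T` is a strictly positive
finite-valued stopping time with announcing sequence `ρ`, the jump `ΔX_T` is a.s.
nonzero and measurable w.r.t. `⋁ₙ 𝓕_{ρₙ}`, and `A := {1/k ≤ |ΔX_T| ≤ k}` has positive
probability for some `k ≥ 1`, then there are bounded stopping times `σₙ ≤ τₙ` and
`𝓕_{σₙ}`-measurable positions `ξₙ` with `|ξₙ| ≤ k`, converging a.s., whose
buy-and-hold gains converge a.s. to `1_A · 1_{T ≤ t}` for every `t ≥ 0`. -/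
theorem stmt1
    {Ω : Type*} {m : MeasurableSpace Ω} {P : Measure Ω} [IsProbabilityMeasure P]
    (F : Filtration ℝ≥0 m)
    -- usual conditions: right-continuity and completeness
    (husual_rc : ∀ t : ℝ≥0, F t = ⨅ (s : ℝ≥0) (_ : t < s), F s)
    (husual_compl : ∀ A : Set Ω, MeasurableSet A → P A = 0 → MeasurableSet[F 0] A)
    (X Xm : ℝ≥0 → Ω → ℝ)
    (hadapted : Adapted F X)
    -- càdlàg paths: right-continuity and existence of (finite) left limits `Xm`
    (hrc : ∀ ω, ∀ t : ℝ≥0, Tendsto (fun s => X s ω) (𝓝[>] t) (𝓝 (X t ω)))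
    (hll : ∀ ω, ∀ t : ℝ≥0, 0 < t → Tendsto (fun s => X s ω) (𝓝[<] t) (𝓝 (Xm t ω)))
    (T : Ω → ℝ≥0) (hT : IsStoppingTime F (fun ω => (T ω : WithTop ℝ≥0)))
    (hTpos : ∀ᵐ ω ∂P, 0 < T ω)
    -- announcing sequence for `T`
    (ρ : ℕ → Ω → ℝ≥0) (hρ : ∀ n, IsStoppingTime F (fun ω => (ρ n ω : WithTop ℝ≥0)))
    (hρmono : ∀ n, ∀ ω, ρ n ω ≤ ρ (n + 1) ω)
    (hρlt : ∀ᵐ ω ∂P, ∀ n, ρ n ω < T ω)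
    (hρlim : ∀ᵐ ω ∂P, Tendsto (fun n => ρ n ω) atTop (𝓝 (T ω)))
    -- the jump at `T` is a.s. nonzero and `⋁ₙ 𝓕_{ρₙ}`-measurable
    (hjump : ∀ᵐ ω ∂P, X (T ω) ω - Xm (T ω) ω ≠ 0)
    (hpred : Measurable[⨆ n, (hρ n).measurableSpace]
      (fun ω => X (T ω) ω - Xm (T ω) ω))
    (k : ℝ) (hk : 1 ≤ k)
    (A : Set Ω)
    (hA : A = {ω | 1 / k ≤ |X (T ω) ω - Xm (T ω) ω| ∧ |X (T ω) ω - Xm (T ω) ω| ≤ k})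
    (hApos : 0 < P A) :
    ∃ (σ τ' : ℕ → Ω → ℝ≥0) (ξ : ℕ → Ω → ℝ) (hσ : ∀ n, IsStoppingTime F (fun ω => (σ n ω : WithTop ℝ≥0))),
      (∀ n, IsStoppingTime F (fun ω => (τ' n ω : WithTop ℝ≥0))) ∧
      (∀ n, ∃ C : ℝ≥0, ∀ ω, τ' n ω ≤ C) ∧
      (∀ n, ∀ ω, σ n ω ≤ τ' n ω) ∧
      (∀ n, Measurable[(hσ n).measurableSpace] (ξ n)) ∧
      (∀ n, ∀ᵐ ω ∂P, |ξ n ω| ≤ k) ∧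
      (∃ ξ' : Ω → ℝ, ∀ᵐ ω ∂P, Tendsto (fun n => ξ n ω) atTop (𝓝 (ξ' ω))) ∧
      (∀ t : ℝ≥0, ∀ᵐ ω ∂P,
        Tendsto (fun n =>
            ξ n ω * (X (min (τ' n ω) t) ω - X (min (σ n ω) t) ω)) atTop
          (𝓝 (A.indicator (fun _ => (1 : ℝ)) ω
            * (if T ω ≤ t then (1 : ℝ) else 0)))) := by
  classical
  have hk0 : (0 : ℝ) < k := lt_of_lt_of_le one_pos hk
  set D : Ω → ℝ := fun ω => X (T ω) ω - Xm (T ω) ω with hD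
  -- the exceptional null set where the announcing property fails
  set N : Set Ω := {ω | ∃ n, T ω ≤ ρ n ω} with hNdef
  have hNmeas : MeasurableSet N := by
    have h : N = ⋃ n, {ω | T ω ≤ ρ n ω} := by ext ω; simp [hNdef]
    rw [h]
    exact MeasurableSet.iUnion fun n =>
      by
        have hs : {ω | T ω ≤ ρ n ω} = {ω | (T ω : WithTop ℝ≥0) ≤ (ρ n ω : WithTop ℝ≥0)} := by
          ext ω; simp only [mem_setOf_eq, WithTop.coe_le_coe]
        rw [hs]; exact measurableSet_le hT.measurable' (hρ n).measurable'
  have hNnull : P N = 0 := by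
    have : {ω | ¬ ∀ n, ρ n ω < T ω} = N := by
      ext ω; simp [hNdef, not_forall, not_lt]
    rw [← this]
    exact hρlt
  have hNae : ∀ᵐ ω ∂P, ω ∉ N := by
    rw [ae_iff]
    simpa [not_not] using hNnull
  have hNF : ∀ t : ℝ≥0, MeasurableSet[F t] N := fun t =>
    F.mono (zero_le : (0:ℝ≥0) ≤ t) _ (husual_compl N hNmeas hNnull)
  -- the stopping times
  set σ : ℕ → Ω → ℝ≥0 := fun n ω => min (min (ρ n ω) (T ω)) (n : ℝ≥0) with hσdef
  set τ'' : ℕ → Ω → ℝ≥0 := fun n ω => min (T ω) (n : ℝ≥0) with hτ''def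
  have hσ : ∀ n, IsStoppingTime F (fun ω => (σ n ω : WithTop ℝ≥0)) := fun n => by
    convert ((hρ n).min hT).min_const (n : ℝ≥0) using 2 with ω
    simp only [hσdef, WithTop.coe_min]
  have hτ' : ∀ n, IsStoppingTime F (fun ω => (τ'' n ω : WithTop ℝ≥0)) := fun n => by
    convert hT.min_const (n : ℝ≥0) using 2 with ω
    simp only [hτ''def, WithTop.coe_min]
  have hρm : ∀ ω, Monotone fun n => ρ n ω := fun ω =>
    monotone_nat_of_le_succ (fun n => hρmono n ω)
  have hσle : ∀ ⦃a b : ℕ⦄, a ≤ b → ∀ ω, σ a ω ≤ σ b ω := fun a b hab ω =>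
    min_le_min (min_le_min (hρm ω hab) le_rfl) (by exact_mod_cast Nat.cast_le.2 hab)
  -- N belongs to each 𝓕_{σ n}
  have hNσ : ∀ n, MeasurableSet[(hσ n).measurableSpace] N := by
    intro n
    rw [IsStoppingTime.measurableSet]
    refine ⟨le_iSup F 0 _ (hNF 0), fun t => ?_⟩
    exact (hNF t).inter ((hσ n) t)
  -- key: sets in 𝓕_{ρ n}, cut by Nᶜ, are in ⨆ j 𝓕_{σ j}
  have key : ∀ n (B : Set Ω), MeasurableSet[(hρ n).measurableSpace] B →
      MeasurableSet[⨆ j, (hσ j).measurableSpace] (B ∩ Nᶜ) := by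
    intro n B hB
    have hBU : B ∩ Nᶜ = ⋃ j, ((B ∩ {ω | ρ n ω ≤ ((max n j : ℕ) : ℝ≥0)}) ∩ Nᶜ) := by
      ext ω
      simp only [mem_inter_iff, mem_iUnion, mem_setOf_eq]
      constructor
      · rintro ⟨hBω, hNω⟩
        obtain ⟨j, hj⟩ := exists_nat_ge (ρ n ω)
        exact ⟨j, ⟨hBω, hj.trans (by exact_mod_cast Nat.cast_le.2 (le_max_right n j))⟩, hNω⟩
      · rintro ⟨j, ⟨hBω, _⟩, hNω⟩
        exact ⟨hBω, hNω⟩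
    rw [hBU]
    refine MeasurableSet.iUnion fun j => ?_
    set M : ℕ := max n j with hM
    set C : Set Ω := B ∩ {ω | ρ n ω ≤ ((M : ℕ) : ℝ≥0)} with hC
    -- C is measurable for the stopped σ-algebra 𝓕_{ρ M ∧ M}
    have hC1 : MeasurableSet[((hρ n).min_const ((M : ℕ) : ℝ≥0)).measurableSpace] C := by
      have hCeq : C = B ∩ {ω | (ρ n ω : WithTop ℝ≥0) ≤ (((M : ℕ) : ℝ≥0) : WithTop ℝ≥0)} := by
        rw [hC]; ext ω; simp only [mem_inter_iff, mem_setOf_eq, WithTop.coe_le_coe]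
      rw [hCeq]
      refine ((hρ n).measurableSet_inter_le_const_iff B _).1 ?_
      exact hB.inter ((hρ n).measurableSet_le' _)
    have hC2 : MeasurableSet[((hρ M).min_const ((M : ℕ) : ℝ≥0)).measurableSpace] C := by
      refine IsStoppingTime.measurableSpace_mono _ _ ?_ _ hC1
      intro ω
      exact min_le_min (WithTop.coe_le_coe.2 (hρm ω (le_max_left n j))) le_rfl
    -- hence C ∩ Nᶜ is measurable for 𝓕_{σ M}
    have hC3 : MeasurableSet[(hσ M).measurableSpace] (C ∩ Nᶜ) := by
      rw [IsStoppingTime.measurableSet]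
      refine ⟨hC2.1.inter (le_iSup F 0 _ (hNF 0)).compl, fun t => ?_⟩
      have hCt : MeasurableSet[F t]
          (C ∩ {ω | min (ρ M ω) ((M : ℕ) : ℝ≥0) ≤ t}) := by
        have hs : {ω | min (ρ M ω) ((M : ℕ) : ℝ≥0) ≤ t} = {ω | min (ρ M ω : WithTop ℝ≥0)
            (((M : ℕ) : ℝ≥0) : WithTop ℝ≥0) ≤ t} := by
          ext ω; simp only [mem_setOf_eq, ← WithTop.coe_min, WithTop.coe_le_coe]
        rw [hs]; exact hC2.2 t
      have hset : (C ∩ Nᶜ) ∩ {ω | σ M ω ≤ t}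
          = (C ∩ {ω | min (ρ M ω) ((M : ℕ) : ℝ≥0) ≤ t}) ∩ Nᶜ := by
        ext ω
        simp only [mem_inter_iff, mem_compl_iff, mem_setOf_eq, hσdef, hNdef]
        constructor
        · rintro ⟨⟨hCω, hNω⟩, hσt⟩
          have hρT : ρ M ω < T ω := by
            by_contra h
            exact hNω ⟨M, not_lt.1 h⟩
          rw [min_eq_left hρT.le] at hσt
          exact ⟨⟨hCω, hσt⟩, hNω⟩
        · rintro ⟨⟨hCω, hmt⟩, hNω⟩
          have hρT : ρ M ω < T ω := by
            by_contra h
            exact hNω ⟨M, not_lt.1 h⟩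
          refine ⟨⟨hCω, hNω⟩, ?_⟩
          rwa [min_eq_left hρT.le]
      simp only [WithTop.coe_le_coe]
      rw [hset]
      exact hCt.inter (hNF t).compl
    exact (le_iSup (fun j => (hσ j).measurableSpace) M) _ hC3
  have hNsup : MeasurableSet[⨆ j, (hσ j).measurableSpace] N :=
    (le_iSup (fun j => (hσ j).measurableSpace) 0) _ (hNσ 0)
  -- extend `key` to the whole σ-algebra ⨆ n 𝓕_{ρ n}
  have key' : ∀ B : Set Ω, MeasurableSet[⨆ n, (hρ n).measurableSpace] B →
      MeasurableSet[⨆ j, (hσ j).measurableSpace] (B ∩ Nᶜ) := by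
    intro B hB
    let S : MeasurableSpace Ω :=
      { MeasurableSet' := fun B => MeasurableSet[⨆ j, (hσ j).measurableSpace] (B ∩ Nᶜ)
        measurableSet_empty := by simpa using (MeasurableSet.empty :
          MeasurableSet[⨆ j, (hσ j).measurableSpace] ∅)
        measurableSet_compl := by
          intro s hs
          have h1 : sᶜ ∩ Nᶜ = ((s ∩ Nᶜ) ∪ N)ᶜ := by
            ext ω; by_cases hω : ω ∈ N <;> simp [hω]
          rw [h1]
          exact (hs.union hNsup).compl
        measurableSet_iUnion := by
          intro f hf
          rw [Set.iUnion_inter]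
          exact MeasurableSet.iUnion hf }
    have hle : (⨆ n, (hρ n).measurableSpace) ≤ S :=
      iSup_le fun n B hB => key n B hB
    exact hle B hB
  -- the limiting position g
  set g : Ω → ℝ := fun ω => if ω ∈ N then 0 else A.indicator (fun ω => (D ω)⁻¹) ω
    with hgdef
  have hgbd : ∀ ω, |g ω| ≤ k := by
    intro ω
    rw [hgdef]
    by_cases hω : ω ∈ N
    · simp [hω]; linarith
    · simp only [if_neg hω]
      by_cases hωA : ω ∈ A
      · rw [Set.indicator_of_mem hωA]
        have hAω := hA ▸ hωA
        obtain ⟨h1, h2⟩ := hAω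
        rw [abs_inv]
        have h1k : (0:ℝ) < 1 / k := by positivity
        calc |D ω|⁻¹ ≤ (1/k)⁻¹ := inv_anti₀ h1k h1
          _ = k := by rw [one_div, inv_inv]
      · rw [Set.indicator_of_notMem hωA]
        simp; linarith
  -- g is measurable w.r.t. ⨆ j 𝓕_{σ j}
  have hAρ : MeasurableSet[⨆ n, (hρ n).measurableSpace] A := by
    rw [hA]
    have habs : Measurable[⨆ n, (hρ n).measurableSpace] fun ω => |D ω| := measurable_abs.comp hpred
    exact habs measurableSet_Icc
  have hg0 : Measurable[⨆ n, (hρ n).measurableSpace]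
      (A.indicator (fun ω => (D ω)⁻¹)) := (measurable_inv.comp hpred).indicator hAρ
  have hgmeas : Measurable[⨆ j, (hσ j).measurableSpace] g := by
    intro s hs
    have hpre : g ⁻¹' s =
        ((A.indicator (fun ω => (D ω)⁻¹)) ⁻¹' s ∩ Nᶜ) ∪
          (if (0:ℝ) ∈ s then N else ∅) := by
      ext ω
      by_cases hω : ω ∈ N
      · by_cases h0 : (0:ℝ) ∈ s <;> simp [hgdef, hω, h0]
      · by_cases h0 : (0:ℝ) ∈ s <;> simp [hgdef, hω, h0]
    rw [hpre]
    refine (key' _ (hg0 hs)).union ?_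
    by_cases h0 : (0:ℝ) ∈ s
    · simpa [h0] using hNsup
    · simp [h0]
  have hsuple : (⨆ j, (hσ j).measurableSpace) ≤ m :=
    iSup_le fun j => (hσ j).measurableSpace_le
  have hgmeasm : Measurable g := hgmeas.mono hsuple le_rfl
  have hgint : Integrable g P := by
    refine (integrable_const k).mono' hgmeasm.aestronglyMeasurable ?_
    exact Eventually.of_forall fun ω => by simpa [Real.norm_eq_abs] using hgbd ω
  -- the discrete filtration of the σ_n
  set G : Filtration ℕ m :=
    { seq := fun n => (hσ n).measurableSpace
      mono' := fun a b hab =>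
        IsStoppingTime.measurableSpace_mono (hσ a) (hσ b) (fun ω => WithTop.coe_le_coe.2 (hσle hab ω))
      le' := fun n => (hσ n).measurableSpace_le } with hGdef
  have hgsm : StronglyMeasurable[⨆ n, G n] g := hgmeas.stronglyMeasurable
  have hlevy : ∀ᵐ ω ∂P, Tendsto (fun n => (P[g|G n]) ω) atTop (𝓝 (g ω)) :=
    hgint.tendsto_ae_condExp hgsm
  -- the positions
  set ξ : ℕ → Ω → ℝ := fun n ω => max (-k) (min k ((P[g|G n]) ω)) with hξdef
  have hξmeas : ∀ n, Measurable[(hσ n).measurableSpace] (ξ n) := by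
    intro n
    exact measurable_const.max (measurable_const.min
      (stronglyMeasurable_condExp.measurable :
        Measurable[(hσ n).measurableSpace] (P[g|G n])))
  have hξbd : ∀ n ω, |ξ n ω| ≤ k := by
    intro n ω
    rw [abs_le]
    refine ⟨le_max_left _ _, max_le (by linarith) (min_le_left _ _)⟩
  have hξconv : ∀ᵐ ω ∂P, Tendsto (fun n => ξ n ω) atTop (𝓝 (g ω)) := by
    filter_upwards [hlevy] with ω hω
    have h1 : Tendsto (fun n => max (-k) (min k ((P[g|G n]) ω))) atTop
        (𝓝 (max (-k) (min k (g ω)))) :=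
      tendsto_const_nhds.max (tendsto_const_nhds.min hω)
    have h2 : max (-k) (min k (g ω)) = g ω := by
      obtain ⟨hl, hr⟩ := abs_le.1 (hgbd ω)
      rw [min_eq_right hr, max_eq_right hl]
    rwa [h2] at h1
  refine ⟨σ, τ'', ξ, hσ, hτ', fun n => ⟨n, fun ω => min_le_right _ _⟩,
    fun n ω => min_le_min (min_le_right _ _) le_rfl, hξmeas,
    fun n => Eventually.of_forall fun ω => hξbd n ω, ⟨g, hξconv⟩, ?_⟩
  -- the main convergence of the gains
  intro t
  filter_upwards [hTpos, hρlim, hjump, hξconv, hNae] with ω hTposω hρlimω hjumpω hξω hNω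
  have hρltω : ∀ n, ρ n ω < T ω := by
    intro n
    by_contra h
    exact hNω ⟨n, not_lt.1 h⟩
  by_cases hTt : T ω ≤ t
  · -- the jump happens before t : gains converge to 1_A
    have hinner : Tendsto (fun n => ρ n ω) atTop (𝓝[<] (T ω)) :=
      tendsto_nhdsWithin_of_tendsto_nhds_of_eventually_within _ hρlimω
        (Eventually.of_forall fun n => hρltω n)
    have hXlim : Tendsto (fun n => X (ρ n ω) ω) atTop (𝓝 (Xm (T ω) ω)) :=
      (hll ω (T ω) hTposω).comp hinner
    have hmain : Tendsto (fun n => ξ n ω * (X (T ω) ω - X (ρ n ω) ω)) atTop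
        (𝓝 (g ω * D ω)) :=
      hξω.mul (tendsto_const_nhds.sub hXlim)
    have hval : g ω * D ω
        = A.indicator (fun _ => (1:ℝ)) ω * (if T ω ≤ t then (1:ℝ) else 0) := by
      rw [if_pos hTt, mul_one, hgdef]
      simp only [if_neg hNω]
      by_cases hωA : ω ∈ A
      · rw [Set.indicator_of_mem hωA, Set.indicator_of_mem hωA,
          inv_mul_cancel₀ hjumpω]
      · rw [Set.indicator_of_notMem hωA, Set.indicator_of_notMem hωA, zero_mul]
    rw [← hval]
    refine Tendsto.congr' ?_ hmain
    obtain ⟨n₀, hn₀⟩ := exists_nat_ge (T ω)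
    filter_upwards [eventually_ge_atTop n₀] with n hn
    have hTn : T ω ≤ (n : ℝ≥0) :=
      hn₀.trans (by exact_mod_cast Nat.cast_le.2 hn)
    have h1 : min (τ'' n ω) t = T ω := by
      rw [hτ''def]
      simp only
      rw [min_eq_left hTn, min_eq_left hTt]
    have h2 : min (σ n ω) t = ρ n ω := by
      rw [hσdef]
      simp only
      rw [min_eq_left (hρltω n).le, min_eq_left ((hρltω n).le.trans hTn),
        min_eq_left ((hρltω n).le.trans hTt)]
    rw [h1, h2]
  · -- the jump happens after t : gains are eventually 0
    have hval : A.indicator (fun _ => (1:ℝ)) ω * (if T ω ≤ t then (1:ℝ) else 0) = 0 := by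
      rw [if_neg hTt, mul_zero]
    rw [hval]
    obtain ⟨n₁, hn₁⟩ := exists_nat_ge t
    have htT : t < T ω := not_le.1 hTt
    have hev : ∀ᶠ n in atTop, t < ρ n ω :=
      hρlimω.eventually (eventually_gt_nhds htT)
    refine Tendsto.congr' ?_ tendsto_const_nhds
    filter_upwards [eventually_ge_atTop n₁, hev] with n hn hρn
    have htn : t ≤ (n : ℝ≥0) := hn₁.trans (by exact_mod_cast Nat.cast_le.2 hn)
    have h1 : min (τ'' n ω) t = t := by
      rw [hτ''def]
      simp only
      rw [min_eq_right (le_min htT.le htn)]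
    have h2 : min (σ n ω) t = t := by
      rw [hσdef]
      simp only
      rw [min_eq_right (le_min (le_min hρn.le htT.le) htn)]
    rw [h1, h2, sub_self, mul_zero]
end

section
/- Let X be a càdlàg adapted real-valued process. Let τ : Ω → [0,∞] be measurable with P(τ < ∞) > 0, let σ_n ≤ τ_n be bounded stopping times with σ_n → τ and τ_n → τ a.s., and let ξ_n be 𝓕_{σ_n}-measurable random variables with sup_n |ξ_n| ≤ M a.s. for a constant M and ξ_n → ξ a.s. Let ζ be a random variable with ζ > 0 a.s. on {τ < ∞}, and assume that almost surely, for every t ≥ 0, ξ_n·(X_{τ_n∧t} − X_{σ_n∧t}) → ζ·1_{τ≤t} as n → ∞. Then, almost surely on {τ < ∞}: τ > 0, ΔX_τ ≠ 0, ξ ≠ 0, ξ·ΔX_τ = ζ, and {τ < ∞, ΔX_τ > 0} coincides up to a null set with {τ < ∞, ξ > 0}; moreover there is a ⋁_n 𝓕_{σ_n}-measurable set equal a.s. to {τ < ∞, ΔX_τ > 0}. -/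
open MeasureTheory Filter Set
open scoped NNReal ENNReal Topology

/-- A sure profit via a flash strategy forces a predictable jump:
if the gains `ξₙ·(X_{τₙ∧t} - X_{σₙ∧t})` of a flash strategy converge a.s. to
`ζ·1_{τ≤t}` for all `t`, with `ζ > 0` on `{τ < ∞}`, then a.s. on `{τ < ∞}` one has
`τ > 0`, `ΔX_τ ≠ 0`, `ξ ≠ 0`, `ξ·ΔX_τ = ζ`, the events `{τ<∞, ΔX_τ>0}` and
`{τ<∞, ξ>0}` coincide up to a null set, and `{τ<∞, ΔX_τ>0}` agrees a.s. with a
`⋁ₙ 𝓕_{σₙ}`-measurable set. -/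
theorem stmt2
    {Ω : Type*} {m : MeasurableSpace Ω} {P : Measure Ω} [IsProbabilityMeasure P]
    (F : Filtration ℝ≥0 m)
    (X Xm : ℝ≥0 → Ω → ℝ)
    (hadapted : Adapted F X)
    -- càdlàg paths: right-continuity and existence of (finite) left limits `Xm`
    (hrc : ∀ ω, ∀ t : ℝ≥0, Tendsto (fun s => X s ω) (𝓝[>] t) (𝓝 (X t ω)))
    (hll : ∀ ω, ∀ t : ℝ≥0, 0 < t → Tendsto (fun s => X s ω) (𝓝[<] t) (𝓝 (Xm t ω)))
    (τ : Ω → ℝ≥0∞) (hτ : Measurable τ) (hτfin : 0 < P {ω | τ ω < ∞})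
    (σ τ' : ℕ → Ω → ℝ≥0)
    (hσ : ∀ n, IsStoppingTime F (fun ω => ((σ n ω : ℝ≥0) : WithTop ℝ≥0)))
    (hτ' : ∀ n, IsStoppingTime F (fun ω => ((τ' n ω : ℝ≥0) : WithTop ℝ≥0)))
    (hσbdd : ∀ n, ∃ C : ℝ≥0, ∀ ω, σ n ω ≤ C)
    (hτ'bdd : ∀ n, ∃ C : ℝ≥0, ∀ ω, τ' n ω ≤ C)
    (hle : ∀ n, ∀ ω, σ n ω ≤ τ' n ω)
    (hσlim : ∀ᵐ ω ∂P, Tendsto (fun n => (σ n ω : ℝ≥0∞)) atTop (𝓝 (τ ω)))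
    (hτ'lim : ∀ᵐ ω ∂P, Tendsto (fun n => (τ' n ω : ℝ≥0∞)) atTop (𝓝 (τ ω)))
    (ξ : ℕ → Ω → ℝ) (hξmeas : ∀ n, Measurable[(hσ n).measurableSpace] (ξ n))
    (M : ℝ) (hξbdd : ∀ᵐ ω ∂P, ∀ n, |ξ n ω| ≤ M)
    (ξ' : Ω → ℝ) (hξlim : ∀ᵐ ω ∂P, Tendsto (fun n => ξ n ω) atTop (𝓝 (ξ' ω)))
    (ζ : Ω → ℝ) (hζpos : ∀ᵐ ω ∂P, τ ω < ∞ → 0 < ζ ω)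
    (hgains : ∀ᵐ ω ∂P, ∀ t : ℝ≥0,
      Tendsto (fun n =>
          ξ n ω * (X (min (τ' n ω) t) ω - X (min (σ n ω) t) ω)) atTop
        (𝓝 (if τ ω ≤ (t : ℝ≥0∞) then ζ ω else 0))) :
    (∀ᵐ ω ∂P, τ ω < ∞ →
      (0 < τ ω ∧
        X (τ ω).toNNReal ω - Xm (τ ω).toNNReal ω ≠ 0 ∧
        ξ' ω ≠ 0 ∧
        ξ' ω * (X (τ ω).toNNReal ω - Xm (τ ω).toNNReal ω) = ζ ω)) ∧
    (∀ᵐ ω ∂P,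
      ((τ ω < ∞ ∧ 0 < X (τ ω).toNNReal ω - Xm (τ ω).toNNReal ω) ↔
        (τ ω < ∞ ∧ 0 < ξ' ω))) ∧
    (∃ B : Set Ω, MeasurableSet[⨆ n, (hσ n).measurableSpace] B ∧
      ∀ᵐ ω ∂P, (ω ∈ B ↔
        (τ ω < ∞ ∧ 0 < X (τ ω).toNNReal ω - Xm (τ ω).toNNReal ω))) := by
  have key : ∀ᵐ ω ∂P, τ ω < ∞ →
      (0 < τ ω ∧
        X (τ ω).toNNReal ω - Xm (τ ω).toNNReal ω ≠ 0 ∧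
        ξ' ω ≠ 0 ∧
        ξ' ω * (X (τ ω).toNNReal ω - Xm (τ ω).toNNReal ω) = ζ ω) := by
    filter_upwards [hσlim, hτ'lim, hξbdd, hξlim, hζpos, hgains]
      with ω h1 h2 h3 h4 h5 h6 hfin
    have hz : 0 < ζ ω := h5 hfin
    set T : ℝ≥0 := (τ ω).toNNReal with hTdef
    have hτT : τ ω = (T : ℝ≥0∞) := (ENNReal.coe_toNNReal hfin.ne).symm
    -- Step A : `0 < τ ω`
    have hτpos : 0 < τ ω := by
      by_contra h0
      have h0 : τ ω = 0 := le_zero_iff.mp (not_lt.mp h0)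
      have h60 := h6 0
      rw [if_pos (by simp [h0])] at h60
      have hzero : (fun n => ξ n ω *
          (X (min (τ' n ω) 0) ω - X (min (σ n ω) 0) ω)) = fun _ => (0:ℝ) := by
        funext n
        rw [min_eq_right (by positivity), min_eq_right (by positivity), sub_self, mul_zero]
      rw [hzero] at h60
      have : (0:ℝ) = ζ ω := tendsto_nhds_unique tendsto_const_nhds h60
      linarith
    have hTpos : 0 < T := by rwa [hτT, ENNReal.coe_pos] at hτpos
    have h1' : Tendsto (fun n => σ n ω) atTop (𝓝 T) :=
      ENNReal.tendsto_coe.mp (by rwa [hτT] at h1)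
    have h2' : Tendsto (fun n => τ' n ω) atTop (𝓝 T) :=
      ENNReal.tendsto_coe.mp (by rwa [hτT] at h2)
    have hf : Tendsto (fun n => ξ n ω *
        (X (min (τ' n ω) T) ω - X (min (σ n ω) T) ω)) atTop (𝓝 (ζ ω)) := by
      have := h6 T
      rwa [if_pos (le_of_eq hτT)] at this
    have hhalf : ∀ᶠ n in atTop,
        ζ ω / 2 < ξ n ω * (X (min (τ' n ω) T) ω - X (min (σ n ω) T) ω) :=
      hf.eventually (eventually_gt_nhds (half_lt_self hz))
    have hM0 : (0:ℝ) ≤ M := le_trans (abs_nonneg _) (h3 0)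
    -- (a) eventually `σ n ω < T`
    have hA : ∀ᶠ n in atTop, σ n ω < T := by
      by_contra hcon
      rw [not_eventually] at hcon
      have hcon' : ∃ᶠ n in atTop, T ≤ σ n ω := hcon.mono fun n h => not_lt.mp h
      obtain ⟨n, hn1, hn2⟩ := (hhalf.and_frequently hcon').exists
      rw [min_eq_right (le_trans hn2 (hle n ω)), min_eq_right hn2, sub_self,
        mul_zero] at hn1
      linarith
    -- (b) eventually `T ≤ τ' n ω`
    have hB : ∀ᶠ n in atTop, T ≤ τ' n ω := by
      by_contra hcon
      rw [not_eventually] at hcon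
      have hcon' : ∃ᶠ n in atTop, τ' n ω < T := hcon.mono fun n h => not_le.mp h
      set ε : ℝ := ζ ω / (4 * (M + 1)) with hε
      have hεpos : 0 < ε := by positivity
      have hMe : M * (ε + ε) < ζ ω / 2 := by
        rw [hε, ← add_div, mul_div_assoc' M _ _, div_lt_div_iff₀ (by linarith) two_pos]
        nlinarith [hz]
      have hXev : ∀ᶠ s in 𝓝[<] T, |X s ω - Xm T ω| < ε := by
        have := (Metric.tendsto_nhds.mp (hll ω T hTpos)) ε hεpos
        simpa [Real.dist_eq] using this
      rw [eventually_nhdsWithin_iff] at hXev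
      have hXev1 : ∀ᶠ n in atTop, τ' n ω ∈ Iio T → |X (τ' n ω) ω - Xm T ω| < ε :=
        h2'.eventually hXev
      have hXev2 : ∀ᶠ n in atTop, σ n ω ∈ Iio T → |X (σ n ω) ω - Xm T ω| < ε :=
        h1'.eventually hXev
      obtain ⟨n, ⟨⟨⟨hhn, hσn⟩, hb1⟩, hb2⟩, hτn⟩ :=
        ((((hhalf.and hA).and hXev1).and hXev2).and_frequently hcon').exists
      have e1 : |X (τ' n ω) ω - Xm T ω| < ε := hb1 hτn
      have e2 : |X (σ n ω) ω - Xm T ω| < ε := hb2 hσn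
      rw [min_eq_left hτn.le, min_eq_left hσn.le] at hhn
      have habs : |X (τ' n ω) ω - X (σ n ω) ω| ≤
          |X (τ' n ω) ω - Xm T ω| + |Xm T ω - X (σ n ω) ω| := abs_sub_le _ _ _
      rw [abs_sub_comm (Xm T ω)] at habs
      have hle1 : ξ n ω * (X (τ' n ω) ω - X (σ n ω) ω) ≤ M * (ε + ε) := by
        calc ξ n ω * (X (τ' n ω) ω - X (σ n ω) ω)
            ≤ |ξ n ω * (X (τ' n ω) ω - X (σ n ω) ω)| := le_abs_self _
          _ = |ξ n ω| * |X (τ' n ω) ω - X (σ n ω) ω| := abs_mul _ _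
          _ ≤ M * (ε + ε) := mul_le_mul (h3 n) (by linarith) (abs_nonneg _) hM0
      linarith
    -- (c) identify the limit
    have hmem : Tendsto (fun n => σ n ω) atTop (𝓝[<] T) :=
      tendsto_nhdsWithin_iff.mpr ⟨h1', hA⟩
    have hXσ : Tendsto (fun n => X (σ n ω) ω) atTop (𝓝 (Xm T ω)) :=
      (hll ω T hTpos).comp hmem
    have hlim2 : Tendsto (fun n => ξ n ω * (X T ω - X (σ n ω) ω)) atTop
        (𝓝 (ξ' ω * (X T ω - Xm T ω))) := h4.mul (tendsto_const_nhds.sub hXσ)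
    have hEv : (fun n => ξ n ω * (X (min (τ' n ω) T) ω - X (min (σ n ω) T) ω))
        =ᶠ[atTop] fun n => ξ n ω * (X T ω - X (σ n ω) ω) := by
      filter_upwards [hA, hB] with n ha hb
      rw [min_eq_right hb, min_eq_left ha.le]
    have heq : ξ' ω * (X T ω - Xm T ω) = ζ ω :=
      tendsto_nhds_unique hlim2 (Tendsto.congr' hEv hf)
    refine ⟨hτpos, ?_, ?_, heq⟩
    · intro h; rw [h, mul_zero] at heq; linarith
    · intro h; rw [h, zero_mul] at heq; linarith
  have part2 : ∀ᵐ ω ∂P,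
      ((τ ω < ∞ ∧ 0 < X (τ ω).toNNReal ω - Xm (τ ω).toNNReal ω) ↔
        (τ ω < ∞ ∧ 0 < ξ' ω)) := by
    filter_upwards [key, hζpos] with ω hω hζω
    constructor
    · rintro ⟨hfin, hΔ⟩
      obtain ⟨-, -, -, heq⟩ := hω hfin
      have hprod : 0 < ξ' ω * (X (τ ω).toNNReal ω - Xm (τ ω).toNNReal ω) := by
        rw [heq]; exact hζω hfin
      rcases mul_pos_iff.mp hprod with ⟨h1, -⟩ | ⟨-, h2⟩
      · exact ⟨hfin, h1⟩
      · linarith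
    · rintro ⟨hfin, hξ⟩
      obtain ⟨-, -, -, heq⟩ := hω hfin
      have hprod : 0 < ξ' ω * (X (τ ω).toNNReal ω - Xm (τ ω).toNNReal ω) := by
        rw [heq]; exact hζω hfin
      rcases mul_pos_iff.mp hprod with ⟨-, h1⟩ | ⟨h2, -⟩
      · exact ⟨hfin, h1⟩
      · linarith
  refine ⟨key, part2, ?_⟩
  classical
  refine ⟨{ω | (∃ K : ℕ, ∀ᶠ n in atTop, σ n ω ≤ (K : ℝ≥0)) ∧
      ∃ q : ℚ, 0 < q ∧ ∀ᶠ n in atTop, (q : ℝ) ≤ ξ n ω}, ?_, ?_⟩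
  · have hσm : ∀ n, Measurable[⨆ n, (hσ n).measurableSpace] (σ n) := fun n =>
      (((hσ n).measurable).mono (le_iSup (fun n => (hσ n).measurableSpace) n) le_rfl).untopD 0
    have hξm : ∀ n, Measurable[⨆ n, (hσ n).measurableSpace] (ξ n) := fun n =>
      (hξmeas n).mono (le_iSup (fun n => (hσ n).measurableSpace) n) le_rfl
    have hrw : {ω | (∃ K : ℕ, ∀ᶠ n in atTop, σ n ω ≤ (K : ℝ≥0)) ∧
        ∃ q : ℚ, 0 < q ∧ ∀ᶠ n in atTop, (q : ℝ) ≤ ξ n ω} =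
        (⋃ K : ℕ, ⋃ N : ℕ, ⋂ n, ⋂ (_ : N ≤ n), {ω | σ n ω ≤ (K : ℝ≥0)}) ∩
        (⋃ q : ℚ, ⋃ N : ℕ, ⋂ n, ⋂ (_ : N ≤ n), {ω | 0 < q ∧ (q : ℝ) ≤ ξ n ω}) := by
      ext ω
      simp only [mem_setOf_eq, mem_inter_iff, mem_iUnion, mem_iInter, eventually_atTop]
      constructor
      · rintro ⟨⟨K, N, hN⟩, q, hq, N', hN'⟩
        exact ⟨⟨K, N, fun n hn => hN n hn⟩, q, N', fun n hn => ⟨hq, hN' n hn⟩⟩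
      · rintro ⟨⟨K, N, hN⟩, q, N', hN'⟩
        exact ⟨⟨K, N, hN⟩, q, (hN' N' le_rfl).1, N', fun n hn => (hN' n hn).2⟩
    rw [hrw]
    refine MeasurableSet.inter ?_ ?_
    · exact MeasurableSet.iUnion fun K => MeasurableSet.iUnion fun N =>
        MeasurableSet.iInter fun n => MeasurableSet.iInter fun _ =>
          measurableSet_le (hσm n) measurable_const
    · refine MeasurableSet.iUnion fun q => MeasurableSet.iUnion fun N =>
        MeasurableSet.iInter fun n => MeasurableSet.iInter fun _ => ?_
      by_cases hq : 0 < q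
      · have hset : {ω | 0 < q ∧ (q : ℝ) ≤ ξ n ω} = {ω | (q : ℝ) ≤ ξ n ω} := by
          ext ω; simp [hq]
        rw [hset]
        exact measurableSet_le measurable_const (hξm n)
      · have hset : {ω | 0 < q ∧ (q : ℝ) ≤ ξ n ω} = (∅ : Set Ω) := by
          ext ω; simp [hq]
        rw [hset]
        exact @MeasurableSet.empty Ω (⨆ n, (hσ n).measurableSpace)
  · filter_upwards [key, hσlim, hξlim, hζpos] with ω hkey h1 h4 h5
    by_cases hfin : τ ω < ∞
    · obtain ⟨-, -, -, heq⟩ := hkey hfin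
      have hz : 0 < ζ ω := h5 hfin
      have hprod : 0 < ξ' ω * (X (τ ω).toNNReal ω - Xm (τ ω).toNNReal ω) := by
        rw [heq]; exact hz
      have hiff : 0 < ξ' ω ↔ 0 < X (τ ω).toNNReal ω - Xm (τ ω).toNNReal ω := by
        constructor <;> intro h
        · rcases mul_pos_iff.mp hprod with ⟨-, h2⟩ | ⟨h2, -⟩
          · exact h2
          · linarith
        · rcases mul_pos_iff.mp hprod with ⟨h2, -⟩ | ⟨-, h2⟩
          · exact h2
          · linarith
      constructor
      · rintro ⟨-, q, hq, hev⟩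
        have hq' : (q : ℝ) ≤ ξ' ω := ge_of_tendsto h4 hev
        have : 0 < ξ' ω := lt_of_lt_of_le (by exact_mod_cast hq) hq'
        exact ⟨hfin, hiff.mp this⟩
      · rintro ⟨-, hΔ⟩
        have hξpos : 0 < ξ' ω := hiff.mpr hΔ
        have h1' : Tendsto (fun n => σ n ω) atTop (𝓝 (τ ω).toNNReal) := by
          refine ENNReal.tendsto_coe.mp ?_
          rwa [ENNReal.coe_toNNReal hfin.ne]
        constructor
        · refine ⟨⌈((τ ω).toNNReal + 1 : ℝ≥0)⌉₊, ?_⟩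
          have hev : ∀ᶠ n in atTop, σ n ω < (τ ω).toNNReal + 1 :=
            h1'.eventually_lt_const (lt_add_of_pos_right _ one_pos)
          exact hev.mono fun n hn => le_trans hn.le (Nat.le_ceil _)
        · obtain ⟨q, hq0, hq1⟩ := exists_rat_btwn hξpos
          refine ⟨q, by exact_mod_cast hq0, ?_⟩
          exact (h4.eventually (eventually_gt_nhds hq1)).mono fun n hn => hn.le
    · refine iff_of_false ?_ fun h => hfin h.1
      rintro ⟨⟨K, hev⟩, -⟩
      have htop : τ ω = ∞ := by simpa [lt_top_iff_ne_top] using hfin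
      have hev2 : ∀ᶠ n in atTop, ((K : ℝ≥0) : ℝ≥0∞) < (σ n ω : ℝ≥0∞) := by
        rw [htop] at h1
        exact h1.eventually (eventually_gt_nhds ENNReal.coe_lt_top)
      obtain ⟨n, hn1, hn2⟩ := (hev.and hev2).exists
      exact absurd (ENNReal.coe_lt_coe.mp hn2) (not_lt.mpr hn1)
end

section
/- Let X be a càdlàg adapted real-valued process. Let τ : Ω → [0,∞] be measurable with P(τ < ∞) > 0, let σ_n ≤ τ_n be bounded stopping times with σ_n → τ and τ_n → τ a.s., and let ξ_n be 𝓕_{σ_n}-measurable random variables with sup_n |ξ_n| ≤ M a.s. for a constant M and ξ_n → ξ a.s. Let c > 0 be a constant and assume that almost surely, for every t ≥ 0, ξ_n·(X_{τ_n∧t} − X_{σ_n∧t}) → c·1_{τ≤t} as n → ∞. Then, almost surely on {τ < ∞}: ΔX_τ ≠ 0, ξ ≠ 0 and ΔX_τ = c/ξ; moreover there is a ⋁_n 𝓕_{σ_n}-measurable random variable equal a.s. to ΔX_τ·1_{τ<∞} (a constant profit via a flash strategy forces a fully predictable jump). -/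
open MeasureTheory Filter Set
open scoped NNReal ENNReal Topology

/-- A constant profit via a flash strategy forces a fully
predictable jump: if the gains of a flash strategy converge a.s. to `c·1_{τ≤t}`
for all `t`, with `c > 0` constant, then a.s. on `{τ < ∞}` one has `ΔX_τ ≠ 0`,
`ξ ≠ 0` and `ΔX_τ = c/ξ`; moreover there is a `⋁ₙ 𝓕_{σₙ}`-measurable random
variable equal a.s. to `ΔX_τ·1_{τ<∞}`. -/
theorem stmt3
    {Ω : Type*} {m : MeasurableSpace Ω} {P : Measure Ω} [IsProbabilityMeasure P]
    (F : Filtration ℝ≥0 m)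
    (X Xm : ℝ≥0 → Ω → ℝ)
    (hadapted : Adapted F X)
    -- càdlàg paths: right-continuity and existence of (finite) left limits `Xm`
    (hrc : ∀ ω, ∀ t : ℝ≥0, Tendsto (fun s => X s ω) (𝓝[>] t) (𝓝 (X t ω)))
    (hll : ∀ ω, ∀ t : ℝ≥0, 0 < t → Tendsto (fun s => X s ω) (𝓝[<] t) (𝓝 (Xm t ω)))
    (τ : Ω → ℝ≥0∞) (hτ : Measurable τ) (hτfin : 0 < P {ω | τ ω < ∞})
    (σ τ' : ℕ → Ω → ℝ≥0)
    (hσ : ∀ n, IsStoppingTime F (fun ω => (σ n ω : WithTop ℝ≥0)))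
    (hτ' : ∀ n, IsStoppingTime F (fun ω => (τ' n ω : WithTop ℝ≥0)))
    (hσbdd : ∀ n, ∃ C : ℝ≥0, ∀ ω, σ n ω ≤ C)
    (hτ'bdd : ∀ n, ∃ C : ℝ≥0, ∀ ω, τ' n ω ≤ C)
    (hle : ∀ n, ∀ ω, σ n ω ≤ τ' n ω)
    (hσlim : ∀ᵐ ω ∂P, Tendsto (fun n => (σ n ω : ℝ≥0∞)) atTop (𝓝 (τ ω)))
    (hτ'lim : ∀ᵐ ω ∂P, Tendsto (fun n => (τ' n ω : ℝ≥0∞)) atTop (𝓝 (τ ω)))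
    (ξ : ℕ → Ω → ℝ) (hξmeas : ∀ n, Measurable[(hσ n).measurableSpace] (ξ n))
    (M : ℝ) (hξbdd : ∀ᵐ ω ∂P, ∀ n, |ξ n ω| ≤ M)
    (ξ' : Ω → ℝ) (hξlim : ∀ᵐ ω ∂P, Tendsto (fun n => ξ n ω) atTop (𝓝 (ξ' ω)))
    (c : ℝ) (hc : 0 < c)
    (hgains : ∀ᵐ ω ∂P, ∀ t : ℝ≥0,
      Tendsto (fun n =>
          ξ n ω * (X (min (τ' n ω) t) ω - X (min (σ n ω) t) ω)) atTop
        (𝓝 (if τ ω ≤ (t : ℝ≥0∞) then c else 0))) :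
    (∀ᵐ ω ∂P, τ ω < ∞ →
      (X (τ ω).toNNReal ω - Xm (τ ω).toNNReal ω ≠ 0 ∧
        ξ' ω ≠ 0 ∧
        X (τ ω).toNNReal ω - Xm (τ ω).toNNReal ω = c / ξ' ω)) ∧
    (∃ g : Ω → ℝ, Measurable[⨆ n, (hσ n).measurableSpace] g ∧
      ∀ᵐ ω ∂P, g ω =
        (if τ ω < ∞ then X (τ ω).toNNReal ω - Xm (τ ω).toNNReal ω else 0)) := by
  classical
  have key : ∀ᵐ ω ∂P, τ ω < ∞ →
      (X (τ ω).toNNReal ω - Xm (τ ω).toNNReal ω ≠ 0 ∧ ξ' ω ≠ 0 ∧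
        X (τ ω).toNNReal ω - Xm (τ ω).toNNReal ω = c / ξ' ω) := by
    filter_upwards [hσlim, hτ'lim, hξlim, hgains] with ω hσω hτ'ω hξω hgω hτω
    set t : ℝ≥0 := (τ ω).toNNReal with htdef
    have hts : (t : ℝ≥0∞) = τ ω := ENNReal.coe_toNNReal hτω.ne
    have hσt : Tendsto (fun n => σ n ω) atTop (𝓝 t) := by
      rw [← ENNReal.tendsto_coe, hts]; exact hσω
    have hτ't : Tendsto (fun n => τ' n ω) atTop (𝓝 t) := by
      rw [← ENNReal.tendsto_coe, hts]; exact hτ'ω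
    have hg : Tendsto (fun n =>
        ξ n ω * (X (min (τ' n ω) t) ω - X (min (σ n ω) t) ω)) atTop (𝓝 c) := by
      have := hgω t
      rwa [if_pos (le_of_eq hts.symm)] at this
    -- eventually `σ n ω < t`
    have hI0 : ∀ᶠ n in atTop, σ n ω < t := by
      by_contra h
      rw [Filter.not_eventually] at h
      have h' : ∃ᶠ n in atTop, t ≤ σ n ω := h.mono fun n hn => not_lt.mp hn
      obtain ⟨φ, hφmono, hφ⟩ := Filter.extraction_of_frequently_atTop h'
      have h0 : ∀ k,
          (fun n => ξ n ω * (X (min (τ' n ω) t) ω - X (min (σ n ω) t) ω)) (φ k) = 0 := by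
        intro k
        have h1 : min (σ (φ k) ω) t = t := min_eq_right (hφ k)
        have h2 : min (τ' (φ k) ω) t = t := min_eq_right ((hφ k).trans (hle _ ω))
        simp only [h1, h2, sub_self, mul_zero]
      have hcomp := hg.comp hφmono.tendsto_atTop
      have : Tendsto (fun _ : ℕ => (0 : ℝ)) atTop (𝓝 c) := by
        refine hcomp.congr fun k => ?_
        exact h0 k
      exact hc.ne' (tendsto_nhds_unique this tendsto_const_nhds)
    -- eventually `t ≤ τ' n ω`
    have hI2 : ∀ᶠ n in atTop, t ≤ τ' n ω := by
      by_contra h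
      rw [Filter.not_eventually] at h
      have h' : ∃ᶠ n in atTop, τ' n ω < t := h.mono fun n hn => not_le.mp hn
      obtain ⟨φ, hφmono, hφ⟩ := Filter.extraction_of_frequently_atTop h'
      have htpos : 0 < t := lt_of_le_of_lt zero_le (hφ 0)
      have hXτ' : Tendsto (fun k => X (τ' (φ k) ω) ω) atTop (𝓝 (Xm t ω)) := by
        refine (hll ω t htpos).comp ?_
        exact tendsto_nhdsWithin_of_tendsto_nhds_of_eventually_within _
          (hτ't.comp hφmono.tendsto_atTop) (Eventually.of_forall hφ)
      have hXσ : Tendsto (fun k => X (σ (φ k) ω) ω) atTop (𝓝 (Xm t ω)) := by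
        refine (hll ω t htpos).comp ?_
        exact tendsto_nhdsWithin_of_tendsto_nhds_of_eventually_within _
          (hσt.comp hφmono.tendsto_atTop)
          (Eventually.of_forall fun k => lt_of_le_of_lt (hle _ ω) (hφ k))
      have hprod : Tendsto (fun k =>
          ξ (φ k) ω * (X (min (τ' (φ k) ω) t) ω - X (min (σ (φ k) ω) t) ω)) atTop
          (𝓝 (ξ' ω * (Xm t ω - Xm t ω))) := by
        refine Tendsto.mul (hξω.comp hφmono.tendsto_atTop) ?_
        refine Tendsto.congr (fun k => ?_) (hXτ'.sub hXσ)
        rw [min_eq_left (hφ k).le,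
          min_eq_left (le_of_lt (lt_of_le_of_lt (hle _ ω) (hφ k)))]
      rw [sub_self, mul_zero] at hprod
      exact hc.ne' (tendsto_nhds_unique (hg.comp hφmono.tendsto_atTop) hprod)
    obtain ⟨n0, hn0⟩ := hI0.exists
    have htpos : 0 < t := lt_of_le_of_lt zero_le hn0
    have hXσl : Tendsto (fun n => X (σ n ω) ω) atTop (𝓝 (Xm t ω)) :=
      (hll ω t htpos).comp
        (tendsto_nhdsWithin_of_tendsto_nhds_of_eventually_within _ hσt hI0)
    have hprod : Tendsto (fun n =>
        ξ n ω * (X (min (τ' n ω) t) ω - X (min (σ n ω) t) ω)) atTop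
        (𝓝 (ξ' ω * (X t ω - Xm t ω))) := by
      refine Tendsto.congr' ?_ (hξω.mul (tendsto_const_nhds.sub hXσl))
      filter_upwards [hI0, hI2] with n h1 h2
      rw [min_eq_right h2, min_eq_left h1.le]
    have heq : ξ' ω * (X t ω - Xm t ω) = c := tendsto_nhds_unique hprod hg
    have hξne : ξ' ω ≠ 0 := by
      intro h; rw [h, zero_mul] at heq; exact hc.ne heq
    have hΔne : X t ω - Xm t ω ≠ 0 := by
      intro h; rw [h, mul_zero] at heq; exact hc.ne heq
    refine ⟨hΔne, hξne, ?_⟩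
    rw [eq_div_iff hξne]
    linarith [heq]
  refine ⟨key, ?_⟩
  set m' : MeasurableSpace Ω := ⨆ n, (hσ n).measurableSpace with hm'
  have hξm' : ∀ n, Measurable[m'] (ξ n) := fun n =>
    (hξmeas n).mono (le_iSup (fun n => (hσ n).measurableSpace) n) le_rfl
  have hσm' : ∀ n, Measurable[m'] fun ω => (σ n ω : ℝ≥0∞) := fun n =>
    ((hσ n).measurable).mono
      (le_iSup (fun n => (hσ n).measurableSpace) n) le_rfl
  set L : Ω → ℝ := fun ω => liminf (fun n => ξ n ω) atTop with hL
  set S : Ω → ℝ≥0∞ := fun ω => liminf (fun n => (σ n ω : ℝ≥0∞)) atTop with hS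
  have hLmeas : Measurable[m'] L := Measurable.liminf hξm'
  have hSmeas : Measurable[m'] S := Measurable.liminf hσm'
  refine ⟨fun ω => if S ω < ∞ ∧ L ω ≠ 0 then c / L ω else 0, ?_, ?_⟩
  · refine Measurable.ite ?_ (measurable_const.div hLmeas) measurable_const
    have : {a : Ω | S a < ∞ ∧ L a ≠ 0} =
        (S ⁻¹' (Iio ∞)) ∩ (L ⁻¹' {0})ᶜ := by
      ext a; simp [Set.mem_setOf_eq]
    rw [this]
    exact (hSmeas measurableSet_Iio).inter (hLmeas (measurableSet_singleton 0)).compl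
  · filter_upwards [key, hσlim, hξlim] with ω hkey hσω hξω
    have hSω : S ω = τ ω := hσω.liminf_eq
    by_cases hτω : τ ω < ∞
    · have hLω : L ω = ξ' ω := hξω.liminf_eq
      obtain ⟨hΔ, hξne, hΔeq⟩ := hkey hτω
      rw [if_pos hτω, if_pos ⟨by rw [hSω]; exact hτω, by rw [hLω]; exact hξne⟩,
        hLω, hΔeq]
    · rw [if_neg hτω, if_neg]
      rintro ⟨h1, -⟩
      rw [hSω] at h1
      exact hτω h1
end

section
/- Let X be a càdlàg adapted real-valued process. Let τ : Ω → [0,∞] be measurable with P(τ < ∞) > 0, let σ_n ≤ τ_n be bounded stopping times with σ_n → τ and τ_n → τ a.s., let ξ_n be 𝓕_{σ_n}-measurable with sup_n |ξ_n| ≤ M a.s. and ξ_n → ξ a.s., and let ζ satisfy ζ > 0 a.s. on {τ < ∞}; assume that almost surely, for every t ≥ 0, ξ_n·(X_{τ_n∧t} − X_{σ_n∧t}) → ζ·1_{τ≤t}. Define A_n := {σ_n < τ ≤ τ_n} ∩ {ξ_n ≠ 0}. Then 1_{A_n} → 1_{τ<∞} almost surely as n → ∞; that is, a.s. on {τ <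 ∞} one has σ_n < τ ≤ τ_n and ξ_n ≠ 0 for all sufficiently large n, while a.s. on {τ = ∞} the event A_n fails for every n. -/
open MeasureTheory Filter Set
open scoped NNReal ENNReal Topology

/-- For a flash strategy generating a sure profit at `τ`, the
events `Aₙ := {σₙ < τ ≤ τₙ} ∩ {ξₙ ≠ 0}` satisfy `1_{Aₙ} → 1_{τ<∞}` a.s.; that is,
a.s. on `{τ < ∞}` one has `σₙ < τ ≤ τₙ` and `ξₙ ≠ 0` for all sufficiently large
`n`, while a.s. on `{τ = ∞}` the event `Aₙ` fails for every `n`. -/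
theorem stmt4
    {Ω : Type*} {m : MeasurableSpace Ω} {P : Measure Ω} [IsProbabilityMeasure P]
    (F : Filtration ℝ≥0 m)
    (X Xm : ℝ≥0 → Ω → ℝ)
    (hadapted : Adapted F X)
    -- càdlàg paths: right-continuity and existence of (finite) left limits `Xm`
    (hrc : ∀ ω, ∀ t : ℝ≥0, Tendsto (fun s => X s ω) (𝓝[>] t) (𝓝 (X t ω)))
    (hll : ∀ ω, ∀ t : ℝ≥0, 0 < t → Tendsto (fun s => X s ω) (𝓝[<] t) (𝓝 (Xm t ω)))
    (τ : Ω → ℝ≥0∞) (hτ : Measurable τ) (hτfin : 0 < P {ω | τ ω < ∞})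
    (σ τ' : ℕ → Ω → ℝ≥0)
    (hσ : ∀ n, IsStoppingTime F (fun ω => (σ n ω : WithTop ℝ≥0)))
    (hτ' : ∀ n, IsStoppingTime F (fun ω => (τ' n ω : WithTop ℝ≥0)))
    (hσbdd : ∀ n, ∃ C : ℝ≥0, ∀ ω, σ n ω ≤ C)
    (hτ'bdd : ∀ n, ∃ C : ℝ≥0, ∀ ω, τ' n ω ≤ C)
    (hle : ∀ n, ∀ ω, σ n ω ≤ τ' n ω)
    (hσlim : ∀ᵐ ω ∂P, Tendsto (fun n => (σ n ω : ℝ≥0∞)) atTop (𝓝 (τ ω)))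
    (hτ'lim : ∀ᵐ ω ∂P, Tendsto (fun n => (τ' n ω : ℝ≥0∞)) atTop (𝓝 (τ ω)))
    (ξ : ℕ → Ω → ℝ) (hξmeas : ∀ n, Measurable[(hσ n).measurableSpace] (ξ n))
    (M : ℝ) (hξbdd : ∀ᵐ ω ∂P, ∀ n, |ξ n ω| ≤ M)
    (ξ' : Ω → ℝ) (hξlim : ∀ᵐ ω ∂P, Tendsto (fun n => ξ n ω) atTop (𝓝 (ξ' ω)))
    (ζ : Ω → ℝ) (hζpos : ∀ᵐ ω ∂P, τ ω < ∞ → 0 < ζ ω)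
    (hgains : ∀ᵐ ω ∂P, ∀ t : ℝ≥0,
      Tendsto (fun n =>
          ξ n ω * (X (min (τ' n ω) t) ω - X (min (σ n ω) t) ω)) atTop
        (𝓝 (if τ ω ≤ (t : ℝ≥0∞) then ζ ω else 0)))
    (A : ℕ → Set Ω)
    (hA : ∀ n, A n =
      {ω | (σ n ω : ℝ≥0∞) < τ ω ∧ τ ω ≤ (τ' n ω : ℝ≥0∞)} ∩ {ω | ξ n ω ≠ 0}) :
    (∀ᵐ ω ∂P, Tendsto (fun n => (A n).indicator (fun _ => (1 : ℝ)) ω) atTop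
      (𝓝 ({ω | τ ω < ∞}.indicator (fun _ => (1 : ℝ)) ω))) ∧
    (∀ᵐ ω ∂P, (τ ω < ∞ → ∀ᶠ n in atTop,
        (σ n ω : ℝ≥0∞) < τ ω ∧ τ ω ≤ (τ' n ω : ℝ≥0∞) ∧ ξ n ω ≠ 0) ∧
      (τ ω = ∞ → ∀ n, ω ∉ A n)) := by

  have key : ∀ᵐ ω ∂P, τ ω < ∞ → ∀ᶠ n in atTop,
      (σ n ω : ℝ≥0∞) < τ ω ∧ τ ω ≤ (τ' n ω : ℝ≥0∞) ∧ ξ n ω ≠ 0 := by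
    filter_upwards [hσlim, hτ'lim, hξbdd, hζpos, hgains] with ω hσl hτl hb hζ hg hfin
    set r : ℝ≥0 := (τ ω).toNNReal with hrdef
    have hr : (r : ℝ≥0∞) = τ ω := ENNReal.coe_toNNReal hfin.ne
    have hζ0 : 0 < ζ ω := hζ hfin
    have hgr : Tendsto (fun n =>
        ξ n ω * (X (min (τ' n ω) r) ω - X (min (σ n ω) r) ω)) atTop (𝓝 (ζ ω)) := by
      have := hg r
      rwa [if_pos hr.ge] at this
    have h1 : ∀ᶠ n in atTop,
        0 < ξ n ω * (X (min (τ' n ω) r) ω - X (min (σ n ω) r) ω) :=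
      hgr.eventually (eventually_gt_nhds hζ0)
    have h2 : ∀ᶠ n in atTop, σ n ω < r ∧ ξ n ω ≠ 0 := by
      filter_upwards [h1] with n hn
      constructor
      · by_contra h
        push_neg at h
        have e1 : min (σ n ω) r = r := min_eq_right h
        have e2 : min (τ' n ω) r = r := min_eq_right (h.trans (hle n ω))
        rw [e1, e2] at hn
        simp at hn
      · intro h
        rw [h] at hn
        simp at hn
    have h3 : ∀ᶠ n in atTop, r ≤ τ' n ω := by
      by_contra hcon
      rw [Filter.not_eventually] at hcon
      simp only [not_le] at hcon
      obtain ⟨φ, hφ, hφlt⟩ := extraction_of_frequently_atTop hcon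
      have hrpos : 0 < r := lt_of_le_of_lt zero_le (hφlt 0)
      rw [← hr] at hσl hτl
      have hσr : Tendsto (fun n => σ n ω) atTop (𝓝 r) := ENNReal.tendsto_coe.mp hσl
      have hτr : Tendsto (fun n => τ' n ω) atTop (𝓝 r) := ENNReal.tendsto_coe.mp hτl
      have hσφlt : ∀ n, σ (φ n) ω < r := fun n => lt_of_le_of_lt (hle _ _) (hφlt n)
      have hXσ : Tendsto (fun n => X (σ (φ n) ω) ω) atTop (𝓝 (Xm r ω)) := by
        refine (hll ω r hrpos).comp ?_
        exact tendsto_nhdsWithin_of_tendsto_nhds_of_eventually_within _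
          (hσr.comp hφ.tendsto_atTop) (Eventually.of_forall fun n => hσφlt n)
      have hXτ : Tendsto (fun n => X (τ' (φ n) ω) ω) atTop (𝓝 (Xm r ω)) := by
        refine (hll ω r hrpos).comp ?_
        exact tendsto_nhdsWithin_of_tendsto_nhds_of_eventually_within _
          (hτr.comp hφ.tendsto_atTop) (Eventually.of_forall fun n => hφlt n)
      have hdiff : Tendsto (fun n => X (τ' (φ n) ω) ω - X (σ (φ n) ω) ω) atTop (𝓝 0) := by
        have := hXτ.sub hXσ
        rwa [sub_self] at this
      have hzero : Tendsto (fun n =>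
          ξ (φ n) ω * (X (τ' (φ n) ω) ω - X (σ (φ n) ω) ω)) atTop (𝓝 0) := by
        refine squeeze_zero_norm (a := fun n => M * |X (τ' (φ n) ω) ω - X (σ (φ n) ω) ω|)
          (fun n => ?_) ?_
        · rw [Real.norm_eq_abs, abs_mul]
          exact mul_le_mul_of_nonneg_right (hb _) (abs_nonneg _)
        · have := (tendsto_const_nhds (x := M)).mul hdiff.abs
          rwa [abs_zero, mul_zero] at this
      have hsub : Tendsto (fun n =>
          ξ (φ n) ω * (X (τ' (φ n) ω) ω - X (σ (φ n) ω) ω)) atTop (𝓝 (ζ ω)) := by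
        have h := hgr.comp hφ.tendsto_atTop
        refine h.congr fun n => ?_
        simp only [Function.comp]
        rw [min_eq_left (hφlt n).le, min_eq_left (hσφlt n).le]
      exact absurd (tendsto_nhds_unique hsub hzero) hζ0.ne'
    rw [← hr]
    filter_upwards [h2, h3] with n hn2 hn3
    exact ⟨ENNReal.coe_lt_coe.mpr hn2.1, ENNReal.coe_le_coe.mpr hn3, hn2.2⟩
  have notA : ∀ ω, τ ω = ∞ → ∀ n, ω ∉ A n := by
    intro ω hinf n hmem
    rw [hA n] at hmem
    exact ENNReal.coe_ne_top (top_le_iff.mp (hinf ▸ hmem.1.2))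
  constructor
  · filter_upwards [key] with ω hω
    by_cases hfin : τ ω < ∞
    · have hmem : ω ∈ {ω | τ ω < ∞} := hfin
      rw [Set.indicator_of_mem hmem]
      have hev : ∀ᶠ n in atTop, (A n).indicator (fun _ => (1 : ℝ)) ω = 1 := by
        filter_upwards [hω hfin] with n hn
        have : ω ∈ A n := by
          rw [hA n]
          exact ⟨⟨hn.1, hn.2.1⟩, hn.2.2⟩
        rw [Set.indicator_of_mem this]
      exact Tendsto.congr' (hev.mono fun n h => h.symm) tendsto_const_nhds
    · have hinf : τ ω = ∞ := by simpa using hfin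
      have hnm : ω ∉ {ω | τ ω < ∞} := fun h => hfin h
      rw [Set.indicator_of_notMem hnm]
      have : ∀ n, (A n).indicator (fun _ => (1 : ℝ)) ω = 0 := fun n =>
        Set.indicator_of_notMem (notA ω hinf n) _
      exact Tendsto.congr (fun n => (this n).symm) tendsto_const_nhds
  · filter_upwards [key] with ω hω
    exact ⟨hω, notA ω⟩
end

section
/- Let X be an adapted real-valued process whose paths are làdlàg (finite left and right limits at every point), and write X_{t+}(ω) := lim_{u↓t} X_u(ω). Let τ : Ω → [0,∞] be measurable with P(τ < ∞) > 0, let σ_n ≤ τ_n be bounded stopping times with σ_n → τ and τ_n → τ a.s., and let ξ_n be 𝓕_{σ_n}-measurable random variables with sup_n |ξ_n| ≤ M a.s. for a constant M and ξ_n → ξ a.s. Assume that almost surely, for every t ≥ 0, ξ_n·(X_{τ_n∧t} − X_{σ_n∧t}) → 1_{τ<t} as n → ∞. Then, almost surely on {τ < ∞}, X_{τ+} ≠ X_τ; in particular X cannot have right-continuous paths. -/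
open MeasureTheory Filter Set
open scoped NNReal ENNReal Topology

lemma stmt6_aux (X : ℝ≥0 → ℝ) (T : ℝ≥0)
    (hrl : Tendsto X (𝓝[>] T) (𝓝 (X T)))
    (a b : ℕ → ℝ≥0) (ha : Tendsto a atTop (𝓝 T)) (hb : Tendsto b atTop (𝓝 T))
    (ξ : ℕ → ℝ) (M : ℝ) (hM : ∀ n, |ξ n| ≤ M)
    (h1 : Tendsto (fun n => ξ n * (X (min (b n) (T + 1)) - X (min (a n) (T + 1))))
      atTop (𝓝 1))
    (h0 : Tendsto (fun n => ξ n * (X (min (b n) T) - X (min (a n) T))) atTop (𝓝 0)) :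
    False := by
  -- key: for any c → T, X (c n) - X (min (c n) T) → 0
  have hc : ∀ c : ℕ → ℝ≥0, Tendsto c atTop (𝓝 T) →
      Tendsto (fun n => X (c n) - X (min (c n) T)) atTop (𝓝 0) := by
    intro c hcT
    rw [Metric.tendsto_atTop]
    intro ε hε
    obtain ⟨δ, hδ, hδ'⟩ := Metric.tendsto_nhdsWithin_nhds.mp hrl ε hε
    obtain ⟨N, hN⟩ := Metric.tendsto_atTop.mp hcT δ hδ
    refine ⟨N, fun n hn => ?_⟩
    rcases le_or_gt (c n) T with h | h
    · simp [min_eq_left h, hε]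
    · rw [min_eq_right h.le]
      simpa [Real.dist_eq] using hδ' h (hN n hn)
  -- D n → 0
  have hD : Tendsto (fun n => (X (b n) - X (min (b n) T)) - (X (a n) - X (min (a n) T)))
      atTop (𝓝 0) := by
    simpa using (hc b hb).sub (hc a ha)
  -- ξ n * D n → 0 by boundedness
  have hξD : Tendsto (fun n =>
      ξ n * ((X (b n) - X (min (b n) T)) - (X (a n) - X (min (a n) T)))) atTop (𝓝 0) := by
    have habs : ∀ n, |ξ n * ((X (b n) - X (min (b n) T)) - (X (a n) - X (min (a n) T)))| ≤
        M * |(X (b n) - X (min (b n) T)) - (X (a n) - X (min (a n) T))| := by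
      intro n
      rw [abs_mul]
      exact mul_le_mul_of_nonneg_right (hM n) (abs_nonneg _)
    have hlim : Tendsto (fun n =>
        M * |(X (b n) - X (min (b n) T)) - (X (a n) - X (min (a n) T))|) atTop (𝓝 0) := by
      simpa using (hD.abs.const_mul M)
    exact squeeze_zero_norm habs hlim
  -- but ξ n * D n = gains1 n - gains0 n eventually, which → 1
  have haev : ∀ᶠ n in atTop, a n < T + 1 := ha.eventually_lt_const (lt_add_one T)
  have hbev : ∀ᶠ n in atTop, b n < T + 1 := hb.eventually_lt_const (lt_add_one T)
  have heq : (fun n =>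
      ξ n * ((X (b n) - X (min (b n) T)) - (X (a n) - X (min (a n) T)))) =ᶠ[atTop]
      fun n => ξ n * (X (min (b n) (T + 1)) - X (min (a n) (T + 1))) -
        ξ n * (X (min (b n) T) - X (min (a n) T)) := by
    filter_upwards [haev, hbev] with n hna hnb
    rw [min_eq_left hna.le, min_eq_left hnb.le]
    ring
  have h1' : Tendsto (fun n =>
      ξ n * ((X (b n) - X (min (b n) T)) - (X (a n) - X (min (a n) T)))) atTop (𝓝 1) := by
    rw [Filter.tendsto_congr' heq]
    simpa using h1.sub h0
  exact zero_ne_one (tendsto_nhds_unique hξD h1')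

/-- If a flash strategy has gains converging a.s. to `1_{τ<t}`
for all `t` (with `P(τ<∞) > 0`), then a.s. on `{τ<∞}` the làdlàg process `X`
jumps from the right at `τ`, i.e. `X_{τ+} ≠ X_τ`; in particular `X` cannot have
right-continuous paths. -/
theorem stmt6
    {Ω : Type*} {m : MeasurableSpace Ω} {P : Measure Ω} [IsProbabilityMeasure P]
    (F : Filtration ℝ≥0 m)
    (X Xp : ℝ≥0 → Ω → ℝ)
    (hadapted : Adapted F X)
    -- làdlàg paths: existence of finite right limits `Xp` and of finite left limits
    (hrl : ∀ ω, ∀ t : ℝ≥0, Tendsto (fun s => X s ω) (𝓝[>] t) (𝓝 (Xp t ω)))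
    (hll : ∀ ω, ∀ t : ℝ≥0, 0 < t →
      ∃ l : ℝ, Tendsto (fun s => X s ω) (𝓝[<] t) (𝓝 l))
    (τ : Ω → ℝ≥0∞) (hτ : Measurable τ) (hτfin : 0 < P {ω | τ ω < ∞})
    (σ τ' : ℕ → Ω → ℝ≥0)
    (hσ : ∀ n, IsStoppingTime F (fun ω => ((σ n ω : ℝ≥0) : WithTop ℝ≥0))) (hτ' : ∀ n, IsStoppingTime F (fun ω => ((τ' n ω : ℝ≥0) : WithTop ℝ≥0)))
    (hσbdd : ∀ n, ∃ C : ℝ≥0, ∀ ω, σ n ω ≤ C)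
    (hτ'bdd : ∀ n, ∃ C : ℝ≥0, ∀ ω, τ' n ω ≤ C)
    (hle : ∀ n, ∀ ω, σ n ω ≤ τ' n ω)
    (hσlim : ∀ᵐ ω ∂P, Tendsto (fun n => (σ n ω : ℝ≥0∞)) atTop (𝓝 (τ ω)))
    (hτ'lim : ∀ᵐ ω ∂P, Tendsto (fun n => (τ' n ω : ℝ≥0∞)) atTop (𝓝 (τ ω)))
    (ξ : ℕ → Ω → ℝ) (hξmeas : ∀ n, Measurable[(hσ n).measurableSpace] (ξ n))
    (M : ℝ) (hξbdd : ∀ᵐ ω ∂P, ∀ n, |ξ n ω| ≤ M)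
    (ξ' : Ω → ℝ) (hξlim : ∀ᵐ ω ∂P, Tendsto (fun n => ξ n ω) atTop (𝓝 (ξ' ω)))
    (hgains : ∀ᵐ ω ∂P, ∀ t : ℝ≥0,
      Tendsto (fun n =>
          ξ n ω * (X (min (τ' n ω) t) ω - X (min (σ n ω) t) ω)) atTop
        (𝓝 (if τ ω < (t : ℝ≥0∞) then (1 : ℝ) else 0))) :
    (∀ᵐ ω ∂P, τ ω < ∞ → Xp (τ ω).toNNReal ω ≠ X (τ ω).toNNReal ω) ∧
    ¬ (∀ ω, ∀ t : ℝ≥0, Tendsto (fun s => X s ω) (𝓝[>] t) (𝓝 (X t ω))) := by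
  have part1 : ∀ᵐ ω ∂P, τ ω < ∞ → Xp (τ ω).toNNReal ω ≠ X (τ ω).toNNReal ω := by
    filter_upwards [hσlim, hτ'lim, hξbdd, hgains] with ω hσω hτ'ω hξω hgω hfin heq
    set T : ℝ≥0 := (τ ω).toNNReal with hT
    have hτω : τ ω = (T : ℝ≥0∞) := (ENNReal.coe_toNNReal hfin.ne).symm
    have ha : Tendsto (fun n => σ n ω) atTop (𝓝 T) := by
      rw [← ENNReal.tendsto_coe]
      rw [hτω] at hσω; exact hσω
    have hb : Tendsto (fun n => τ' n ω) atTop (𝓝 T) := by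
      rw [← ENNReal.tendsto_coe]
      rw [hτω] at hτ'ω; exact hτ'ω
    have hrl' : Tendsto (fun s => X s ω) (𝓝[>] T) (𝓝 (X T ω)) := by
      rw [← heq]; exact hrl ω T
    have h1 : Tendsto (fun n =>
        ξ n ω * (X (min (τ' n ω) (T + 1)) ω - X (min (σ n ω) (T + 1)) ω)) atTop (𝓝 1) := by
      have := hgω (T + 1)
      rwa [if_pos (by rw [hτω]; exact_mod_cast lt_add_one T)] at this
    have h0 : Tendsto (fun n =>
        ξ n ω * (X (min (τ' n ω) T) ω - X (min (σ n ω) T) ω)) atTop (𝓝 0) := by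
      have := hgω T
      rwa [if_neg (by rw [hτω]; exact lt_irrefl _)] at this
    exact stmt6_aux (fun s => X s ω) T hrl' (fun n => σ n ω) (fun n => τ' n ω)
      ha hb (fun n => ξ n ω) M hξω h1 h0
  refine ⟨part1, fun hrc => ?_⟩
  have heq : ∀ ω t, Xp t ω = X t ω := fun ω t =>
    tendsto_nhds_unique (hrl ω t) (hrc ω t)
  have : ∀ᵐ ω ∂P, ¬ (τ ω < ∞) := by
    filter_upwards [part1] with ω hω hfin
    exact hω hfin (heq ω _)
  have h0 : P {ω | τ ω < ∞} = 0 := by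
    simpa [lt_top_iff_ne_top] using ae_iff.mp this
  exact absurd h0 hτfin.ne'
end

section
/- Let X and X̃ be real-valued processes with X_t(ω) > 0 and X̃_t(ω) > 0 for all t, ω, whose paths of X are càdlàg, and suppose X and X̃ are ε-close for some ε > 0, i.e. 1/(1+ε) ≤ X̃_t/X_t ≤ 1+ε a.s. for all t ≥ 0. Let τ : Ω → [0,∞] be measurable, let σ_n ≤ τ_n be bounded stopping times with (σ_n) nondecreasing, σ_n → τ and τ_n → τ a.s., and with σ_n < τ a.s. on {τ < ∞}; let ξ_n be 𝓕_{σ_n}-measurable with sup_n |ξ_n| ≤ k a.s. for a constant k and ξ_n → ξ a.s. Assume that almost surely, for every t ≥ 0, ξ_n·(X_{τ_n∧t} − X_{σ_n∧t}) → c·1_{τ≤t} for a constant c > 0, and that X_{τ−} ≤ N a.s. on {τ < ∞} for a constant N > 0. Then, almost surely, for every t ≥ 0: liminf_n ξ_n·(X̃_{τ_n∧t} − X̃_{σ_n∧t}) ≥ (c/(1+ε) − 2εkN)·1_{τ≤t}, and on {τ > t} the gains ξ_n·(X̃_{τ_n∧t} − X̃_{σ_n∧t}) converge to 0; in particular, for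 ε small enough the limiting profit remains bounded below by a strictly positive constant on {τ ≤ t} (constant profits via flash strategies are robust to small proportional transaction costs). -/
open MeasureTheory Filter Set
open scoped NNReal ENNReal Topology

lemma key_ineq {ε k ξ x y x' y' : ℝ} (hε : 0 < ε) (hx : 0 < x) (hy : 0 < y)
    (hx1 : 1 / (1 + ε) ≤ x' / x) (hx2 : x' / x ≤ 1 + ε)
    (hy1 : 1 / (1 + ε) ≤ y' / y) (hy2 : y' / y ≤ 1 + ε)
    (hξ : |ξ| ≤ k) :
    min ((1 + ε)⁻¹ * (ξ * (y - x))) ((1 + ε) * (ξ * (y - x))) - 2 * ε * k * x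
      ≤ ξ * (y' - x') := by
  have h1 : (0:ℝ) < 1 + ε := by linarith
  rw [div_le_div_iff₀ h1 hx] at hx1
  rw [div_le_iff₀ hx] at hx2
  rw [div_le_div_iff₀ h1 hy] at hy1
  rw [div_le_iff₀ hy] at hy2
  obtain ⟨hk1, hk2⟩ := abs_le.mp hξ
  have hk0 : 0 ≤ k := (abs_nonneg ξ).trans hξ
  have hkx : 0 ≤ k * x := mul_nonneg hk0 hx.le
  rcases le_or_gt 0 ξ with hs | hs
  · refine le_trans (sub_le_sub_right (min_le_left _ _) _) ?_
    rw [sub_le_iff_le_add, inv_mul_le_iff₀ h1]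
    have hA : ξ * (1 * y) ≤ ξ * (y' * (1 + ε)) := mul_le_mul_of_nonneg_left hy1 hs
    have hξx2 : ξ * x ≤ k * x := mul_le_mul_of_nonneg_right hk2 hx.le
    have hstep2 : (1 + ε) * (ξ * x') ≤ ξ * x + 2 * ε * ((1 + ε) * (k * x)) := by
      nlinarith [mul_le_mul_of_nonneg_right (mul_le_mul_of_nonneg_left hx2 hs) h1.le,
        mul_le_mul_of_nonneg_left hξx2 (show (0:ℝ) ≤ ε * (2 + ε) by positivity),
        mul_nonneg (mul_nonneg hε.le hε.le) hkx]
    nlinarith [hA, hstep2]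
  · refine le_trans (sub_le_sub_right (min_le_right _ _) _) ?_
    have hA : ξ * ((1 + ε) * y) ≤ ξ * y' := mul_le_mul_of_nonpos_left hy2 hs.le
    have hB : ξ * (x' * (1 + ε)) ≤ ξ * (1 * x) := mul_le_mul_of_nonpos_left hx1 hs.le
    have hξx : -(k * x) ≤ ξ * x := by nlinarith [mul_le_mul_of_nonneg_right hk1 hx.le]
    have hstep : (1 + ε) * (ξ * x') ≤ (1 + ε) * ((1 + ε) * (ξ * x) + 2 * ε * k * x) := by
      nlinarith [hB, mul_le_mul_of_nonneg_left hξx (show (0:ℝ) ≤ ε * (2 + ε) by positivity),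
        mul_nonneg (mul_nonneg hε.le hε.le) hkx]
    have hstep2 : ξ * x' ≤ (1 + ε) * (ξ * x) + 2 * ε * k * x :=
      le_of_mul_le_mul_left hstep h1
    nlinarith [hA, hstep2]

/-- Constant profits via flash strategies are robust to small
proportional transaction costs: if `X̃` is `ε`-close to the strictly positive
càdlàg process `X`, the flash strategy `(ξₙ, σₙ, τₙ)` generates a constant profit
`c > 0` at `τ` under `X`, and `X_{τ-} ≤ N` a.s. on `{τ<∞}`, then a.s. for every
`t ≥ 0` the gains under `X̃` satisfy
`liminfₙ ξₙ·(X̃_{τₙ∧t} - X̃_{σₙ∧t}) ≥ (c/(1+ε) - 2εkN)·1_{τ≤t}`, and on `{τ>t}`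
they converge to `0`. -/
theorem stmt8
    {Ω : Type*} {m : MeasurableSpace Ω} {P : Measure Ω} [IsProbabilityMeasure P]
    (F : Filtration ℝ≥0 m)
    (X Xt Xm : ℝ≥0 → Ω → ℝ)
    (hXpos : ∀ t : ℝ≥0, ∀ ω, 0 < X t ω)
    (hXtpos : ∀ t : ℝ≥0, ∀ ω, 0 < Xt t ω)
    -- càdlàg paths of `X`: right-continuity and existence of left limits `Xm`
    (hrc : ∀ ω, ∀ t : ℝ≥0, Tendsto (fun s => X s ω) (𝓝[>] t) (𝓝 (X t ω)))
    (hll : ∀ ω, ∀ t : ℝ≥0, 0 < t → Tendsto (fun s => X s ω) (𝓝[<] t) (𝓝 (Xm t ω)))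
    -- `ε`-closeness (proportional transaction costs of size `ε`)
    (ε : ℝ) (hε : 0 < ε)
    (hclose : ∀ᵐ ω ∂P, ∀ t : ℝ≥0,
      1 / (1 + ε) ≤ Xt t ω / X t ω ∧ Xt t ω / X t ω ≤ 1 + ε)
    (τ : Ω → ℝ≥0∞) (hτ : Measurable τ)
    (σ τ' : ℕ → Ω → ℝ≥0)
    (hσ : ∀ n, IsStoppingTime F (fun ω => (σ n ω : WithTop ℝ≥0)))
    (hτ' : ∀ n, IsStoppingTime F (fun ω => (τ' n ω : WithTop ℝ≥0)))
    (hσbdd : ∀ n, ∃ C : ℝ≥0, ∀ ω, σ n ω ≤ C)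
    (hτ'bdd : ∀ n, ∃ C : ℝ≥0, ∀ ω, τ' n ω ≤ C)
    (hle : ∀ n, ∀ ω, σ n ω ≤ τ' n ω)
    (hσmono : ∀ n, ∀ ω, σ n ω ≤ σ (n + 1) ω)
    (hσlim : ∀ᵐ ω ∂P, Tendsto (fun n => (σ n ω : ℝ≥0∞)) atTop (𝓝 (τ ω)))
    (hτ'lim : ∀ᵐ ω ∂P, Tendsto (fun n => (τ' n ω : ℝ≥0∞)) atTop (𝓝 (τ ω)))
    (hσlt : ∀ᵐ ω ∂P, τ ω < ∞ → ∀ n, (σ n ω : ℝ≥0∞) < τ ω)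
    (ξ : ℕ → Ω → ℝ) (hξmeas : ∀ n, Measurable[(hσ n).measurableSpace] (ξ n))
    (k : ℝ) (hξbdd : ∀ᵐ ω ∂P, ∀ n, |ξ n ω| ≤ k)
    (ξ' : Ω → ℝ) (hξlim : ∀ᵐ ω ∂P, Tendsto (fun n => ξ n ω) atTop (𝓝 (ξ' ω)))
    (c : ℝ) (hc : 0 < c)
    (hgains : ∀ᵐ ω ∂P, ∀ t : ℝ≥0,
      Tendsto (fun n =>
          ξ n ω * (X (min (τ' n ω) t) ω - X (min (σ n ω) t) ω)) atTop
        (𝓝 (if τ ω ≤ (t : ℝ≥0∞) then c else 0)))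
    (N : ℝ) (hN : 0 < N)
    (hXm : ∀ᵐ ω ∂P, τ ω < ∞ → Xm (τ ω).toNNReal ω ≤ N) :
    ∀ᵐ ω ∂P, ∀ t : ℝ≥0,
      ((c / (1 + ε) - 2 * ε * k * N) * (if τ ω ≤ (t : ℝ≥0∞) then (1 : ℝ) else 0)
        ≤ Filter.liminf (fun n =>
            ξ n ω * (Xt (min (τ' n ω) t) ω - Xt (min (σ n ω) t) ω)) atTop) ∧
      ((t : ℝ≥0∞) < τ ω →
        Tendsto (fun n =>
            ξ n ω * (Xt (min (τ' n ω) t) ω - Xt (min (σ n ω) t) ω)) atTop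
          (𝓝 (0 : ℝ))) := by
  have h1ε : (0:ℝ) < 1 + ε := by linarith
  filter_upwards [hclose, hσlim, hτ'lim, hσlt, hξbdd, hgains, hXm] with ω hcl hσl hτl hlt hkb
    hg hXmb
  intro t
  have hk0 : 0 ≤ k := (abs_nonneg _).trans (hkb 0)
  rcases le_or_gt (τ ω) (t : ℝ≥0∞) with hct | hct
  · -- case τ ω ≤ t
    have hfin : τ ω < ∞ := lt_of_le_of_lt hct ENNReal.coe_lt_top
    set s : ℝ≥0 := (τ ω).toNNReal with hs_def
    have hτs : τ ω = (s : ℝ≥0∞) := (ENNReal.coe_toNNReal hfin.ne).symm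
    have hlt' : ∀ n, σ n ω < s := fun n => ENNReal.coe_lt_coe.mp (hτs ▸ hlt hfin n)
    have hst : s ≤ t := ENNReal.coe_le_coe.mp (hτs ▸ hct)
    have hspos : 0 < s := lt_of_le_of_lt zero_le (hlt' 0)
    have hσs : Tendsto (fun n => σ n ω) atTop (𝓝 s) :=
      ENNReal.tendsto_coe.mp (hτs ▸ hσl)
    have hσsw : Tendsto (fun n => σ n ω) atTop (𝓝[<] s) :=
      tendsto_nhdsWithin_iff.mpr ⟨hσs, Eventually.of_forall fun n => hlt' n⟩
    have hXa : Tendsto (fun n => X (σ n ω) ω) atTop (𝓝 (Xm s ω)) :=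
      (hll ω s hspos).comp hσsw
    have hmin : ∀ n, min (σ n ω) t = σ n ω := fun n => min_eq_left ((hlt' n).le.trans hst)
    have hXa' : Tendsto (fun n => X (min (σ n ω) t) ω) atTop (𝓝 (Xm s ω)) :=
      hXa.congr fun n => by rw [hmin n]
    have hG : Tendsto
        (fun n => ξ n ω * (X (min (τ' n ω) t) ω - X (min (σ n ω) t) ω)) atTop (𝓝 c) := by
      have := hg t; rwa [if_pos hct] at this
    -- the comparison sequence
    set G : ℕ → ℝ := fun n => ξ n ω * (X (min (τ' n ω) t) ω - X (min (σ n ω) t) ω) with hG_def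
    set L : ℝ := Xm s ω with hL_def
    set h : ℕ → ℝ := fun n =>
      min ((1 + ε)⁻¹ * G n) ((1 + ε) * G n) - 2 * ε * k * X (min (σ n ω) t) ω with hh_def
    have hh : Tendsto h atTop
        (𝓝 (min ((1 + ε)⁻¹ * c) ((1 + ε) * c) - 2 * ε * k * L)) :=
      ((hG.const_mul _).min (hG.const_mul _)).sub (hXa'.const_mul _)
    have hptw : ∀ n, h n ≤
        ξ n ω * (Xt (min (τ' n ω) t) ω - Xt (min (σ n ω) t) ω) := fun n =>
      key_ineq hε (hXpos _ ω) (hXpos _ ω) (hcl _).1 (hcl _).2 (hcl _).1 (hcl _).2 (hkb n)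
    -- upper bound on the gains under Xt, to get coboundedness
    have hτ's : Tendsto (fun n => τ' n ω) atTop (𝓝 s) :=
      ENNReal.tendsto_coe.mp (hτs ▸ hτl)
    have hb : Tendsto (fun n => min (τ' n ω) t) atTop (𝓝 s) := by
      have := hτ's.min (tendsto_const_nhds (x := t))
      rwa [min_eq_left hst] at this
    set M : ℝ := max (X s ω) (Xm s ω) + 1 with hM_def
    have hM1 : Xm s ω < M := lt_of_le_of_lt (le_max_right _ _) (by linarith [le_refl M])
    have hM2 : X s ω < M := lt_of_le_of_lt (le_max_left _ _) (by linarith [le_refl M])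
    have hXr : Tendsto (fun u => X u ω) (𝓝[≥] s) (𝓝 (X s ω)) := by
      have h1 : Tendsto (fun u => X u ω) (𝓝[{s}] s) (𝓝 (X s ω)) := by
        rw [nhdsWithin_singleton]
        exact tendsto_pure_nhds _ _
      have h2 := hrc ω s
      have : Ici s = {s} ∪ Ioi s := by
        ext u; simp [eq_comm, le_iff_lt_or_eq, or_comm]
      rw [this, nhdsWithin_union]
      exact tendsto_sup.mpr ⟨h1, h2⟩
    have hXM : ∀ᶠ v in 𝓝 s, X v ω < M := by
      rw [← nhdsWithin_univ, ← Iio_union_Ici (a := s), nhdsWithin_union, eventually_sup]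
      exact ⟨(hll ω s hspos).eventually (eventually_lt_nhds hM1),
        hXr.eventually (eventually_lt_nhds hM2)⟩
    have hbM : ∀ᶠ n in atTop, X (min (τ' n ω) t) ω < M := hb.eventually hXM
    have haM : ∀ᶠ n in atTop, X (min (σ n ω) t) ω < M :=
      hXa'.eventually (eventually_lt_nhds hM1)
    have hub : ∀ᶠ n in atTop,
        ξ n ω * (Xt (min (τ' n ω) t) ω - Xt (min (σ n ω) t) ω) ≤ k * ((1 + ε) * M) := by
      filter_upwards [hbM, haM] with n hnb hna
      have hy' : Xt (min (τ' n ω) t) ω ≤ (1 + ε) * X (min (τ' n ω) t) ω :=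
        (div_le_iff₀ (hXpos _ ω)).mp (hcl _).2
      have hx' : Xt (min (σ n ω) t) ω ≤ (1 + ε) * X (min (σ n ω) t) ω :=
        (div_le_iff₀ (hXpos _ ω)).mp (hcl _).2
      have hy'' : Xt (min (τ' n ω) t) ω ≤ (1 + ε) * M :=
        hy'.trans (mul_le_mul_of_nonneg_left hnb.le h1ε.le)
      have hx'' : Xt (min (σ n ω) t) ω ≤ (1 + ε) * M :=
        hx'.trans (mul_le_mul_of_nonneg_left hna.le h1ε.le)
      have habs : |Xt (min (τ' n ω) t) ω - Xt (min (σ n ω) t) ω| ≤ (1 + ε) * M := by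
        rw [abs_sub_le_iff]
        constructor <;> nlinarith [hXtpos (min (τ' n ω) t) ω, hXtpos (min (σ n ω) t) ω]
      calc ξ n ω * (Xt (min (τ' n ω) t) ω - Xt (min (σ n ω) t) ω)
          ≤ |ξ n ω * (Xt (min (τ' n ω) t) ω - Xt (min (σ n ω) t) ω)| := le_abs_self _
        _ = |ξ n ω| * |Xt (min (τ' n ω) t) ω - Xt (min (σ n ω) t) ω| := abs_mul _ _
        _ ≤ k * ((1 + ε) * M) :=
            mul_le_mul (hkb n) habs (abs_nonneg _) hk0
    have hcob : IsCoboundedUnder (· ≥ ·) atTop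
        (fun n => ξ n ω * (Xt (min (τ' n ω) t) ω - Xt (min (σ n ω) t) ω)) := by
      refine IsBounded.isCobounded_flip ⟨k * ((1 + ε) * M), ?_⟩
      rwa [eventually_map]
    have hliminf : min ((1 + ε)⁻¹ * c) ((1 + ε) * c) - 2 * ε * k * L ≤
        Filter.liminf (fun n =>
          ξ n ω * (Xt (min (τ' n ω) t) ω - Xt (min (σ n ω) t) ω)) atTop := by
      rw [← hh.liminf_eq]
      exact liminf_le_liminf (Eventually.of_forall hptw) hh.isBoundedUnder_ge hcob
    have hminc : min ((1 + ε)⁻¹ * c) ((1 + ε) * c) = c / (1 + ε) := by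
      rw [min_eq_left, div_eq_inv_mul]
      have hinv : (1 + ε)⁻¹ ≤ 1 + ε :=
        le_trans (inv_le_one_of_one_le₀ (by linarith)) (by linarith)
      exact mul_le_mul_of_nonneg_right hinv hc.le
    have hLN : L ≤ N := hXmb hfin
    refine ⟨?_, fun hcontra => absurd hct (not_le.mpr hcontra)⟩
    rw [if_pos hct, mul_one]
    refine le_trans ?_ hliminf
    rw [hminc]
    have : 2 * ε * k * L ≤ 2 * ε * k * N :=
      mul_le_mul_of_nonneg_left hLN (by positivity)
    linarith
  · -- case t < τ ω
    have hev : ∀ᶠ n in atTop,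
        ξ n ω * (Xt (min (τ' n ω) t) ω - Xt (min (σ n ω) t) ω) = 0 := by
      filter_upwards [hσl.eventually (eventually_gt_nhds hct)] with n hn
      have hσt : t ≤ σ n ω := (ENNReal.coe_lt_coe.mp hn).le
      have hτt : t ≤ τ' n ω := hσt.trans (hle n ω)
      rw [min_eq_right hσt, min_eq_right hτt, sub_self, mul_zero]
    have hT0 : Tendsto
        (fun n => ξ n ω * (Xt (min (τ' n ω) t) ω - Xt (min (σ n ω) t) ω)) atTop
        (𝓝 (0 : ℝ)) := tendsto_const_nhds.congr' (hev.mono fun n hn => hn.symm)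
    refine ⟨?_, fun _ => hT0⟩
    rw [if_neg (not_le.mpr hct), mul_zero, hT0.liminf_eq]
end

section
/- Let ε > 0 and k > 0 be real numbers, let x, y, x̃, ỹ be strictly positive reals satisfying 1/(1+ε) ≤ x̃/x ≤ 1+ε and 1/(1+ε) ≤ ỹ/y ≤ 1+ε, and let c be a real number with |c| ≤ k. Then c·(ỹ − x̃) ≥ 1_{c≥0}·c·(y − x)/(1+ε) + 1_{c<0}·(1+ε)·c·(y − x) − |c|·ε·(2+ε)/(1+ε)·x; in particular c·(ỹ − x̃) ≥ 1_{c≥0}·c·(y − x)/(1+ε) + 1_{c<0}·(1+ε)·c·(y − x) − 2εk·x. -/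
/-- Pointwise inequality comparing the gains of a buy-and-hold
position `c` under prices `(x, y)` and under `ε`-perturbed prices `(x̃, ỹ)`:
`c·(ỹ − x̃) ≥ 1_{c≥0}·c·(y − x)/(1+ε) + 1_{c<0}·(1+ε)·c·(y − x) − |c|·ε·(2+ε)/(1+ε)·x`,
and in particular the same lower bound with `−2εk·x` in place of the last term,
where `|c| ≤ k`. -/
theorem stmt9
    (ε k x y xt yt c : ℝ)
    (hε : 0 < ε) (hk : 0 < k)
    (hx : 0 < x) (hy : 0 < y) (hxt : 0 < xt) (hyt : 0 < yt)
    (hx1 : 1 / (1 + ε) ≤ xt / x) (hx2 : xt / x ≤ 1 + ε)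
    (hy1 : 1 / (1 + ε) ≤ yt / y) (hy2 : yt / y ≤ 1 + ε)
    (hc : |c| ≤ k) :
    (c * (yt - xt) ≥
      (if 0 ≤ c then c * (y - x) / (1 + ε) else 0)
        + (if c < 0 then (1 + ε) * (c * (y - x)) else 0)
        - |c| * ε * (2 + ε) / (1 + ε) * x) ∧
    (c * (yt - xt) ≥
      (if 0 ≤ c then c * (y - x) / (1 + ε) else 0)
        + (if c < 0 then (1 + ε) * (c * (y - x)) else 0)
        - 2 * ε * k * x) := by
  have h1 : (0:ℝ) < 1 + ε := by linarith
  have hxl : x ≤ xt * (1 + ε) := by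
    have := (div_le_div_iff₀ h1 hx).mp hx1; linarith
  have hxu : xt ≤ (1 + ε) * x := by
    have := (div_le_iff₀ hx).mp hx2; linarith
  have hyl : y ≤ yt * (1 + ε) := by
    have := (div_le_div_iff₀ h1 hy).mp hy1; linarith
  have hyu : yt ≤ (1 + ε) * y := by
    have := (div_le_iff₀ hy).mp hy2; linarith
  have key : c * (yt - xt) ≥
      (if 0 ≤ c then c * (y - x) / (1 + ε) else 0)
        + (if c < 0 then (1 + ε) * (c * (y - x)) else 0)
        - |c| * ε * (2 + ε) / (1 + ε) * x := by
    rcases le_or_gt 0 c with h | h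
    · rw [if_pos h, if_neg (not_lt.mpr h), abs_of_nonneg h]
      have e : c * (y - x) / (1 + ε) + 0 - c * ε * (2 + ε) / (1 + ε) * x
          = c * (y / (1 + ε) - (1 + ε) * x) := by
        field_simp; ring
      rw [ge_iff_le, e]
      have h1' : y / (1 + ε) ≤ yt := by rw [div_le_iff₀ h1]; linarith
      nlinarith [mul_le_mul_of_nonneg_left h1' h, mul_le_mul_of_nonneg_left hxu h]
    · rw [if_neg (not_le.mpr h), if_pos h, abs_of_neg h]
      have e : 0 + (1 + ε) * (c * (y - x)) - -c * ε * (2 + ε) / (1 + ε) * x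
          = c * ((1 + ε) * y - x / (1 + ε)) := by
        field_simp; ring
      rw [ge_iff_le, e]
      have h2' : x / (1 + ε) ≤ xt := by rw [div_le_iff₀ h1]; linarith
      have hc' : 0 ≤ -c := by linarith
      nlinarith [mul_le_mul_of_nonneg_left hyu hc', mul_le_mul_of_nonneg_left h2' hc']
  refine ⟨key, le_trans ?_ key⟩
  have habs : |c| * ε * (2 + ε) / (1 + ε) * x ≤ 2 * ε * k * x := by
    rw [div_mul_eq_mul_div, div_le_iff₀ h1]
    nlinarith [mul_le_mul_of_nonneg_right hc (mul_nonneg hε.le hx.le),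
      mul_nonneg (mul_nonneg hk.le hε.le) hx.le,
      mul_nonneg (mul_nonneg (abs_nonneg c) hε.le) hx.le]
  linarith
end

section
/- Let f : [0,∞) → ℝ, let t > 0, and suppose f has a finite left limit f(t−) at t, i.e. f(s) → f(t−) as s → t with s < t. Let M ≥ 0, let (a_n), (b_n) be sequences in [0,∞) and (c_n) real numbers with |c_n| ≤ M for all n. For s ≥ 0 define g_n(s) := c_n·(f(min(b_n,s)) − f(min(a_n,s))), and define L_n := c_n·((f(t−)·1_{b_n≥t} + f(b_n)·1_{b_n<t}) − (f(t−)·1_{a_n≥t} + f(a_n)·1_{a_n<t})), which is the left limit of g_n at t. Then sup_n |g_n(u) − L_n| → 0 as u → t with u < t; that is, the left limits of the gains functions g_n at t are attained uniformly in n. -/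
open Filter Set
open scoped NNReal Topology

/-- Uniform attainment of left limits of buy-and-hold gains
functions: if `f` has left limit `l` at `t > 0`, `|cₙ| ≤ M`, and
`gₙ(s) = cₙ·(f(bₙ∧s) − f(aₙ∧s))`, then each `gₙ` has left limit
`Lₙ = cₙ·((l·1_{bₙ≥t} + f(bₙ)·1_{bₙ<t}) − (l·1_{aₙ≥t} + f(aₙ)·1_{aₙ<t}))`
at `t`, and `supₙ |gₙ(u) − Lₙ| → 0` as `u ↑ t`. -/
theorem stmt12
    (f : ℝ≥0 → ℝ) (t : ℝ≥0) (ht : 0 < t) (l : ℝ)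
    (hl : Tendsto f (𝓝[<] t) (𝓝 l))
    (M : ℝ) (hM : 0 ≤ M)
    (a b : ℕ → ℝ≥0) (c : ℕ → ℝ) (hc : ∀ n, |c n| ≤ M)
    (g : ℕ → ℝ≥0 → ℝ)
    (hg : ∀ n, ∀ s : ℝ≥0, g n s = c n * (f (min (b n) s) - f (min (a n) s)))
    (L : ℕ → ℝ)
    (hL : ∀ n, L n = c n * (((if t ≤ b n then l else f (b n)))
      - ((if t ≤ a n then l else f (a n))))) :
    (∀ n, Tendsto (g n) (𝓝[<] t) (𝓝 (L n))) ∧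
    Tendsto (fun u => ⨆ n, |g n u - L n|) (𝓝[<] t) (𝓝 (0 : ℝ)) := by
  rw [Metric.tendsto_nhdsWithin_nhds] at hl
  have key : ∀ ε > 0, ∃ δ > 0, ∀ u : ℝ≥0, u < t → dist u t < δ →
      ∀ n, |g n u - L n| ≤ M * (4 * ε) := by
    intro ε hε
    obtain ⟨δ, hδ, hδ'⟩ := hl ε hε
    refine ⟨δ, hδ, fun u hu hud n => ?_⟩
    have hfu : |f u - l| < ε := by
      have := hδ' hu hud
      rwa [Real.dist_eq] at this
    have hterm : ∀ x : ℝ≥0, |f (min x u) - (if t ≤ x then l else f x)| ≤ 2 * ε := by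
      intro x
      by_cases h : t ≤ x
      · have hmin : min x u = u := min_eq_right (le_of_lt (lt_of_lt_of_le hu h))
        rw [if_pos h, hmin]
        nlinarith [hfu, abs_nonneg (f u - l)]
      · push_neg at h
        rw [if_neg (not_le.mpr h)]
        rcases le_or_gt x u with h2 | h2
        · rw [min_eq_left h2]
          simp only [sub_self, abs_zero]
          positivity
        · rw [min_eq_right h2.le]
          have hxt : dist x t < δ := by
            rw [NNReal.dist_eq] at hud ⊢
            rw [abs_lt] at hud ⊢
            have c1 : (u : ℝ) < x := NNReal.coe_lt_coe.mpr h2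
            have c2 : (x : ℝ) < t := NNReal.coe_lt_coe.mpr h
            constructor <;> [linarith [hud.1]; linarith]
          have hfx : |f x - l| < ε := by
            have := hδ' h hxt
            rwa [Real.dist_eq] at this
          have htri := abs_sub_le (f u) l (f x)
          rw [abs_sub_comm l (f x)] at htri
          linarith
    rw [hg, hL]
    have heq : c n * (f (min (b n) u) - f (min (a n) u)) -
        c n * ((if t ≤ b n then l else f (b n)) - (if t ≤ a n then l else f (a n))) =
        c n * ((f (min (b n) u) - (if t ≤ b n then l else f (b n))) -
          (f (min (a n) u) - (if t ≤ a n then l else f (a n)))) := by ring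
    rw [heq, abs_mul]
    have hZ : |(f (min (b n) u) - (if t ≤ b n then l else f (b n))) -
        (f (min (a n) u) - (if t ≤ a n then l else f (a n)))| ≤ 4 * ε := by
      have h1 := hterm (b n)
      have h2 := hterm (a n)
      have h3 := abs_sub (f (min (b n) u) - (if t ≤ b n then l else f (b n)))
        (f (min (a n) u) - (if t ≤ a n then l else f (a n)))
      linarith
    exact mul_le_mul (hc n) hZ (abs_nonneg _) hM
  have key2 : ∀ ε > 0, ∃ δ > 0, ∀ u : ℝ≥0, u < t → dist u t < δ →
      ∀ n, |g n u - L n| ≤ ε / 2 := by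
    intro ε hε
    obtain ⟨δ, hδ, hkey⟩ := key (ε / (8 * (M + 1))) (by positivity)
    refine ⟨δ, hδ, fun u hu hud n => ?_⟩
    have h1 := hkey u hu hud n
    have h2 : M * (4 * (ε / (8 * (M + 1)))) ≤ ε / 2 := by
      rw [le_div_iff₀ (by norm_num : (0:ℝ) < 2)]
      have hM1 : (0:ℝ) < M + 1 := by linarith
      rw [div_eq_mul_inv]
      have : M * (4 * (ε * (8 * (M + 1))⁻¹)) * 2 = ε * (M / (M + 1)) := by
        field_simp
        ring
      rw [this]
      have : M / (M + 1) ≤ 1 := by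
        rw [div_le_one hM1]; linarith
      nlinarith
    linarith
  constructor
  · intro n
    rw [Metric.tendsto_nhdsWithin_nhds]
    intro ε hε
    obtain ⟨δ, hδ, hkey⟩ := key2 ε hε
    refine ⟨δ, hδ, fun u hu hud => ?_⟩
    rw [Real.dist_eq]
    have := hkey u hu hud n
    linarith
  · rw [Metric.tendsto_nhdsWithin_nhds]
    intro ε hε
    obtain ⟨δ, hδ, hkey⟩ := key2 ε hε
    refine ⟨δ, hδ, fun u hu hud => ?_⟩
    rw [Real.dist_eq, sub_zero]
    have hsup : (⨆ n, |g n u - L n|) ≤ ε / 2 := ciSup_le (fun n => hkey u hu hud n)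
    have hnn : 0 ≤ ⨆ n, |g n u - L n| := Real.iSup_nonneg (fun n => abs_nonneg _)
    rw [abs_of_nonneg hnn]
    linarith
end

section
/- Let f : [0,∞) → ℝ, let t > 0, and suppose f has a finite left limit f(t−) at t. Let M ≥ 0, let (a_n), (b_n) be sequences in [0,∞) with a_n ≤ b_n and (c_n) real numbers with |c_n| ≤ M for all n. For s ≥ 0 define g_n(s) := c_n·(f(min(b_n,s)) − f(min(a_n,s))), and suppose that for every s ∈ [0,t] the limit G(s) := lim_{n→∞} g_n(s) exists. Then the left limit G(t−) := lim_{u↑t} G(u) exists, the limit lim_{n→∞} c_n·(f(t) − f(t−))·1_{a_n < t ≤ b_n} exists, and G(t) − G(t−) = lim_{n→∞} c_n·(f(t) − f(t−))·1_{a_n < t ≤ b_n}. -/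
open Filter Set
open scoped NNReal Topology

/-- Interchange-of-limits identity for the jump of the limiting
gains of a flash strategy (equation (2.3) of the paper): if `f` has left limit
`l` at `t > 0`, `aₙ ≤ bₙ`, `|cₙ| ≤ M`, `gₙ(s) = cₙ·(f(bₙ∧s) − f(aₙ∧s))` and
`gₙ(s) → G(s)` for every `s ∈ [0,t]`, then the left limit `G(t−)` exists,
`limₙ cₙ·(f(t) − l)·1_{aₙ<t≤bₙ}` exists, and
`G(t) − G(t−) = limₙ cₙ·(f(t) − l)·1_{aₙ<t≤bₙ}`. -/
theorem stmt13
    (f : ℝ≥0 → ℝ) (t : ℝ≥0) (ht : 0 < t) (l : ℝ)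
    (hl : Tendsto f (𝓝[<] t) (𝓝 l))
    (M : ℝ) (hM : 0 ≤ M)
    (a b : ℕ → ℝ≥0) (hab : ∀ n, a n ≤ b n)
    (c : ℕ → ℝ) (hc : ∀ n, |c n| ≤ M)
    (g : ℕ → ℝ≥0 → ℝ)
    (hg : ∀ n, ∀ s : ℝ≥0, g n s = c n * (f (min (b n) s) - f (min (a n) s)))
    (G : ℝ≥0 → ℝ)
    (hG : ∀ s : ℝ≥0, s ≤ t → Tendsto (fun n => g n s) atTop (𝓝 (G s))) :
    ∃ Gm J : ℝ,
      Tendsto G (𝓝[<] t) (𝓝 Gm) ∧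
      Tendsto (fun n => c n * (f t - l)
        * (if a n < t ∧ t ≤ b n then (1 : ℝ) else 0)) atTop (𝓝 J) ∧
      G t - Gm = J := by
  set φ : ℕ → ℝ := fun n => c n * (f t - l)
    * (if a n < t ∧ t ≤ b n then (1 : ℝ) else 0) with hφ
  -- key uniform estimate
  have key : ∀ ε : ℝ, 0 < ε → ∃ u₀ : ℝ≥0, u₀ < t ∧
      ∀ s ∈ Ioo u₀ t, ∀ n, |g n t - g n s - φ n| ≤ 4 * M * ε := by
    intro ε hε
    have hev : {u : ℝ≥0 | |f u - l| < ε} ∈ 𝓝[<] t := by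
      have := Metric.tendsto_nhds.1 hl ε hε
      simp only [Real.dist_eq] at this; exact this
    rcases (mem_nhdsLT_iff_exists_Ioo_subset' ht).1 hev with ⟨u₀, hu₀, hsub⟩
    refine ⟨u₀, hu₀, ?_⟩
    intro s hs n
    -- estimate for a single sequence value
    have est : ∀ x : ℝ≥0,
        |f (min x t) - f (min x s) - (f t - l) * (if t ≤ x then (1:ℝ) else 0)|
          ≤ 2 * ε := by
      intro x
      rcases le_or_gt t x with hx | hx
      · have h1 : min x t = t := min_eq_right hx
        have h2 : min x s = s := min_eq_right (le_of_lt (lt_of_lt_of_le hs.2 hx))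
        have hfs : |f s - l| < ε := hsub hs
        rw [h1, h2, if_pos hx]
        have : f t - f s - (f t - l) * 1 = -(f s - l) := by ring
        rw [this, abs_neg]
        linarith
      · have h1 : min x t = x := min_eq_left hx.le
        rw [if_neg (not_le.2 hx), h1]
        rcases le_or_gt x s with hxs | hxs
        · have h2 : min x s = x := min_eq_left hxs
          simp [h2]
          positivity
        · have h2 : min x s = s := min_eq_right hxs.le
          have hfx : |f x - l| < ε := hsub ⟨lt_trans hs.1 hxs, hx⟩
          have hfs : |f s - l| < ε := hsub hs
          rw [h2]
          have : f x - f s - (f t - l) * 0 = (f x - l) - (f s - l) := by ring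
          rw [this]
          calc |(f x - l) - (f s - l)| ≤ |f x - l| + |f s - l| := abs_sub _ _
            _ ≤ 2 * ε := by linarith
    have hχ : (if a n < t ∧ t ≤ b n then (1:ℝ) else 0)
        = (if t ≤ b n then (1:ℝ) else 0) - (if t ≤ a n then (1:ℝ) else 0) := by
      rcases le_or_gt t (b n) with hb | hb
      · rcases le_or_gt t (a n) with ha | ha
        · rw [if_pos hb, if_pos ha, if_neg (by simp [not_lt.2 ha])]; ring
        · rw [if_pos hb, if_neg (not_le.2 ha), if_pos ⟨ha, hb⟩]; ring
      · have ha : a n < t := lt_of_le_of_lt (hab n) hb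
        rw [if_neg (not_le.2 hb), if_neg (not_le.2 ha),
          if_neg (by simp [not_le.2 hb])]
        ring
    have hEq : g n t - g n s - φ n
        = c n * ((f (min (b n) t) - f (min (b n) s)
            - (f t - l) * (if t ≤ b n then (1:ℝ) else 0))
          - (f (min (a n) t) - f (min (a n) s)
            - (f t - l) * (if t ≤ a n then (1:ℝ) else 0))) := by
      simp only [hφ]; rw [hg n t, hg n s, hχ]; ring
    rw [hEq, abs_mul]
    have hBA := est (b n)
    have hAA := est (a n)
    calc |c n| * |_| ≤ M * (|f (min (b n) t) - f (min (b n) s)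
            - (f t - l) * (if t ≤ b n then (1:ℝ) else 0)|
          + |f (min (a n) t) - f (min (a n) s)
            - (f t - l) * (if t ≤ a n then (1:ℝ) else 0)|) := by
          refine mul_le_mul (hc n) (abs_sub _ _) (abs_nonneg _) hM
      _ ≤ M * (2 * ε + 2 * ε) := by
          refine mul_le_mul_of_nonneg_left (by linarith) hM
      _ = 4 * M * ε := by ring
  have hx : ∀ s : ℝ≥0, s < t →
      Tendsto (fun n => g n t - g n s) atTop (𝓝 (G t - G s)) :=
    fun s hs => (hG t le_rfl).sub (hG s hs.le)
  -- φ is Cauchy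
  have hcauchy : CauchySeq φ := by
    rw [Metric.cauchySeq_iff]
    intro ε' hε'
    have hεpos : (0:ℝ) < ε' / (32 * (M + 1)) := by positivity
    rcases key _ hεpos with ⟨u₀, hu₀, hkey⟩
    rcases exists_between hu₀ with ⟨s, hs1, hs2⟩
    have hsIoo : s ∈ Ioo u₀ t := ⟨hs1, hs2⟩
    have hxc := ((hx s hs2).cauchySeq)
    rw [Metric.cauchySeq_iff] at hxc
    rcases hxc (ε' / 2) (by linarith) with ⟨N, hN⟩
    refine ⟨N, fun m hm n hn => ?_⟩
    have h1 := hkey s hsIoo m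
    have h2 := hkey s hsIoo n
    have hd := hN m hm n hn
    rw [Real.dist_eq] at hd ⊢
    have hbound : 4 * M * (ε' / (32 * (M + 1))) ≤ ε' / 8 := by
      have h2 : 4 * M * (ε' / (32 * (M + 1))) ≤ 4 * (M + 1) * (ε' / (32 * (M + 1))) :=
        mul_le_mul_of_nonneg_right (by linarith) (by positivity)
      have h3 : 4 * (M + 1) * (ε' / (32 * (M + 1))) = ε' / 8 := by
        field_simp; ring
      linarith
    have : φ m - φ n = -((g m t - g m s - φ m))
        + ((g m t - g m s) - (g n t - g n s)) + (g n t - g n s - φ n) := by ring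
    rw [this]
    calc |_| ≤ |(-(g m t - g m s - φ m))
          + ((g m t - g m s) - (g n t - g n s))| + |g n t - g n s - φ n| :=
          abs_add_le _ _
      _ ≤ (|(-(g m t - g m s - φ m))| + |(g m t - g m s) - (g n t - g n s)|)
          + |g n t - g n s - φ n| := by gcongr; exact abs_add_le _ _
      _ < ε' := by rw [abs_neg]; linarith
  rcases cauchySeq_tendsto_of_complete hcauchy with ⟨J, hJ⟩
  refine ⟨G t - J, J, ?_, hJ, by ring⟩
  rw [Metric.tendsto_nhds]
  intro ε' hε'
  have hεpos : (0:ℝ) < ε' / (8 * (M + 1)) := by positivity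
  rcases key _ hεpos with ⟨u₀, hu₀, hkey⟩
  filter_upwards [Ioo_mem_nhdsLT hu₀] with s hs
  have hlim : Tendsto (fun n => |g n t - g n s - φ n|) atTop
      (𝓝 |(G t - G s) - J|) := (((hx s hs.2).sub hJ).abs)
  have hle : |(G t - G s) - J| ≤ 4 * M * (ε' / (8 * (M + 1))) :=
    le_of_tendsto hlim (Eventually.of_forall fun n => hkey s hs n)
  have hbound : 4 * M * (ε' / (8 * (M + 1))) ≤ ε' / 2 := by
    have h2 : 4 * M * (ε' / (8 * (M + 1))) ≤ 4 * (M + 1) * (ε' / (8 * (M + 1))) :=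
      mul_le_mul_of_nonneg_right (by linarith) (by positivity)
    have h3 : 4 * (M + 1) * (ε' / (8 * (M + 1))) = ε' / 2 := by
      field_simp; ring
    linarith
  rw [Real.dist_eq]
  have : G s - (G t - J) = -((G t - G s) - J) := by ring
  rw [this, abs_neg]
  linarith
end

section
/- Let X be a càdlàg adapted real-valued process and suppose there exists a probability measure Q equivalent to P such that X is a martingale under Q with respect to (𝓕_t)_{t≥0}. Let T be a bounded stopping time with T > 0 a.s. admitting an announcing sequence (ρ_n), and suppose that both events {ΔX_T > 0} and {ΔX_T < 0} belong to ⋁_n 𝓕_{ρ_n}. Then ΔX_T = 0 P-almost surely. In particular, a price process admitting an equivalent martingale measure cannot exhibit predictable jumps. -/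
open MeasureTheory Filter Set
open scoped NNReal Topology

namespace Stmt14Aux

noncomputable def dy (k : ℕ) (s : ℝ≥0) : ℝ≥0 := (⌈s * 2 ^ k⌉₊ : ℝ≥0) / 2 ^ k

lemma two_pow_pos' (k : ℕ) : (0 : ℝ≥0) < 2 ^ k := pow_pos two_pos k

lemma le_dy (k : ℕ) (s : ℝ≥0) : s ≤ dy k s := by
  rw [dy, le_div_iff₀ (two_pow_pos' k)]
  exact Nat.le_ceil _

lemma dy_le (k : ℕ) (s : ℝ≥0) : dy k s ≤ s + (2 ^ k)⁻¹ := by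
  rw [dy, div_le_iff₀ (two_pow_pos' k), add_mul, inv_mul_cancel₀ (two_pow_pos' k).ne']
  exact (Nat.ceil_lt_add_one zero_le).le

lemma dy_le_add_one (k : ℕ) (s : ℝ≥0) : dy k s ≤ s + 1 :=
  (dy_le k s).trans (add_le_add_right (by
    rw [inv_le_one₀ (two_pow_pos' k)]
    exact one_le_pow₀ one_le_two) _)

lemma dy_mono (k : ℕ) : Monotone (dy k) := fun s t hst => by
  rw [dy, dy]
  gcongr

lemma tendsto_dy (s : ℝ≥0) : Tendsto (fun k => dy k s) atTop (𝓝 s) := by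
  have h1 : Tendsto (fun k : ℕ => s + (2 ^ k)⁻¹ : ℕ → ℝ≥0) atTop (𝓝 (s + 0)) := by
    refine tendsto_const_nhds.add ?_
    simp_rw [← inv_pow]
    exact NNReal.tendsto_pow_atTop_nhds_zero_of_lt_one (by rw [NNReal.inv_lt_one_iff] <;> norm_num)
  rw [add_zero] at h1
  exact tendsto_of_tendsto_of_tendsto_of_le_of_le tendsto_const_nhds h1
    (fun k => le_dy k s) (fun k => dy_le k s)

lemma dy_isStoppingTime {Ω : Type*} {m : MeasurableSpace Ω} {F : Filtration ℝ≥0 m}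
    {τ : Ω → ℝ≥0} (hτ : IsStoppingTime F (fun ω => (τ ω : WithTop ℝ≥0))) (k : ℕ) :
    IsStoppingTime F (fun ω => (dy k (τ ω) : WithTop ℝ≥0)) := by
  intro t
  simp only [WithTop.coe_le_coe]
  have hset : {ω | dy k (τ ω) ≤ t} = {ω | τ ω ≤ (⌊t * 2 ^ k⌋₊ : ℝ≥0) / 2 ^ k} := by
    ext ω
    simp only [Set.mem_setOf_eq, dy, div_le_iff₀ (two_pow_pos' k),
      le_div_iff₀ (two_pow_pos' k)]
    rw [← Nat.le_floor_iff zero_le, Nat.ceil_le]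
  rw [hset]
  have h' : (⌊t * 2 ^ k⌋₊ : ℝ≥0) / 2 ^ k ≤ t := by
    rw [div_le_iff₀ (two_pow_pos' k)]
    exact Nat.floor_le zero_le
  exact F.mono h' _ (by simpa only [WithTop.coe_le_coe] using hτ ((⌊t * 2 ^ k⌋₊ : ℝ≥0) / 2 ^ k))

lemma dy_countable_range {Ω : Type*} (τ : Ω → ℝ≥0) (k : ℕ) :
    (Set.range fun ω => (dy k (τ ω) : WithTop ℝ≥0)).Countable := by
  refine (Set.countable_range fun n : ℕ => (((n : ℝ≥0) / 2 ^ k : ℝ≥0) : WithTop ℝ≥0)).mono ?_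
  rintro x ⟨ω, rfl⟩
  exact ⟨⌈τ ω * 2 ^ k⌉₊, rfl⟩


/-- convergence along a sequence approaching from the right -/
lemma tendsto_of_rc (f : ℝ≥0 → ℝ) (s : ℝ≥0)
    (hrc : Tendsto f (𝓝[>] s) (𝓝 (f s)))
    {u : ℕ → ℝ≥0} (hu : Tendsto u atTop (𝓝 s)) (hus : ∀ k, s ≤ u k) :
    Tendsto (fun k => f (u k)) atTop (𝓝 (f s)) := by
  have hIci : Tendsto f (𝓝[≥] s) (𝓝 (f s)) := by
    have : ContinuousWithinAt f (Set.Ioi s) s := hrc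
    exact continuousWithinAt_Ioi_iff_Ici.mp this
  exact hIci.comp (tendsto_nhdsWithin_of_tendsto_nhds_of_eventually_within u hu
    (Eventually.of_forall fun k => hus k))


lemma progMeasurable_of_rc {Ω : Type*} {m : MeasurableSpace Ω}
    (F : Filtration ℝ≥0 m) (X : ℝ≥0 → Ω → ℝ) (hadapted : Adapted F X)
    (hrc : ∀ ω, ∀ t : ℝ≥0, Tendsto (fun s => X s ω) (𝓝[>] t) (𝓝 (X t ω))) :
    ProgMeasurable F X := by
  intro i
  set c : ℕ → Set.Iic i → ℝ≥0 := fun k s => min (dy k (s : ℝ≥0)) i with hc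
  have hcle : ∀ k (s : Set.Iic i), c k s ≤ i := fun k s => min_le_right _ _
  have hcge : ∀ k (s : Set.Iic i), (s : ℝ≥0) ≤ c k s := fun k s =>
    le_min (le_dy k _) s.2
  have hcmeas : ∀ k, Measurable (c k) := fun k =>
    (((dy_mono k).measurable).comp measurable_subtype_coe).min measurable_const
  have hU : ∀ k, StronglyMeasurable[Subtype.instMeasurableSpace.prod (F i)]
      (fun p : Set.Iic i × Ω => X (c k p.1) p.2) := by
    intro k
    have hmeas : Measurable[Subtype.instMeasurableSpace.prod (F i)]
        (fun p : Set.Iic i × Ω => X (c k p.1) p.2) := by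
      intro B hB
      have hcnt : (Set.range (c k)).Countable := by
        refine (Set.countable_range fun n : ℕ => min ((n : ℝ≥0) / 2 ^ k) i).mono ?_
        rintro x ⟨s, rfl⟩
        exact ⟨⌈(s : ℝ≥0) * 2 ^ k⌉₊, rfl⟩
      have hset : (fun p : Set.Iic i × Ω => X (c k p.1) p.2) ⁻¹' B =
          ⋃ v ∈ Set.range (c k), ((c k ∘ Prod.fst) ⁻¹' {v}) ∩ (Prod.snd ⁻¹' (X v ⁻¹' B)) := by
        ext p
        simp only [Set.mem_preimage, Set.mem_iUnion, Set.mem_inter_iff, Function.comp_apply,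
          Set.mem_singleton_iff, Set.mem_range, exists_prop]
        constructor
        · intro h
          exact ⟨c k p.1, ⟨p.1, rfl⟩, rfl, h⟩
        · rintro ⟨v, _, hv, h⟩
          rw [hv]; exact h
      rw [hset]
      refine MeasurableSet.biUnion hcnt fun v hv => MeasurableSet.inter ?_ ?_
      · exact ((hcmeas k).comp (@measurable_fst _ _ _ (F i))) (measurableSet_singleton v)
      · obtain ⟨s, rfl⟩ := hv
        have hXv : Measurable[F i] (X (c k s)) :=
          ((hadapted (c k s)).mono (F.mono (hcle k s)) le_rfl)
        exact (hXv.comp (@measurable_snd _ _ _ (F i))) hB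
    exact hmeas.stronglyMeasurable
  refine @stronglyMeasurable_of_tendsto (Set.Iic i × Ω) ℝ ℕ
    (Subtype.instMeasurableSpace.prod (F i)) _ _ atTop _ _
    (fun k (p : Set.Iic i × Ω) => X (c k p.1) p.2) _ hU ?_
  rw [tendsto_pi_nhds]
  intro p
  have hu : Tendsto (fun k => c k p.1) atTop (𝓝 (p.1 : ℝ≥0)) := by
    have := (tendsto_dy (p.1 : ℝ≥0)).min (tendsto_const_nhds (x := i))
    rwa [min_eq_left p.1.2] at this
  exact tendsto_of_rc (fun s => X s p.2) (p.1 : ℝ≥0) (hrc p.2 _) hu (fun k => hcge k p.1)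


variable {Ω : Type*} {m : MeasurableSpace Ω} {Q : Measure Ω} [IsProbabilityMeasure Q]
  {F : Filtration ℝ≥0 m} {X : ℝ≥0 → Ω → ℝ}

/-- L¹ convergence of the dyadic discretizations of a bounded stopping time, together with
integrability of the stopped value. -/
lemma vitali_aux (prog : ProgMeasurable F X) (hmart : Martingale X F Q)
    (hrc : ∀ ω, ∀ t : ℝ≥0, Tendsto (fun s => X s ω) (𝓝[>] t) (𝓝 (X t ω)))
    {τ : Ω → ℝ≥0} (hτ : IsStoppingTime F (fun ω => (τ ω : WithTop ℝ≥0))) {C : ℝ≥0} (hτC : ∀ ω, τ ω ≤ C) :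
    Integrable (stoppedValue X (fun ω => (τ ω : WithTop ℝ≥0))) Q ∧
      ∀ A : Set Ω, Tendsto (fun k => ∫ x in A, stoppedValue X (fun ω => dy k (τ ω)) x ∂Q)
        atTop (𝓝 (∫ x in A, stoppedValue X (fun ω => (τ ω : WithTop ℝ≥0)) x ∂Q)) := by
  have hτk : ∀ k, IsStoppingTime F (fun ω => (dy k (τ ω) : WithTop ℝ≥0)) := dy_isStoppingTime hτ
  have hτkC : ∀ k ω, dy k (τ ω) ≤ C + 1 := fun k ω =>
    (dy_le_add_one k (τ ω)).trans (add_le_add_left (hτC ω) 1)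
  -- optional sampling against the constant time C + 1
  have hOS : ∀ k, stoppedValue X (fun ω => dy k (τ ω)) =ᵐ[Q]
      Q[X (C + 1)|(hτk k).measurableSpace] := fun k =>
    hmart.stoppedValue_ae_eq_condExp_of_le_const_of_countable_range (hτk k)
      (fun ω => WithTop.coe_le_coe.mpr (hτkC k ω)) (dy_countable_range τ k)
  -- uniform integrability
  have hUI : UniformIntegrable (fun k => Q[X (C + 1)|(hτk k).measurableSpace]) 1 Q :=
    (hmart.integrable (C + 1)).uniformIntegrable_condExp
      (fun k => (hτk k).measurableSpace_le_of_le (fun ω => WithTop.coe_le_coe.mpr (hτkC k ω)))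
  have hUI' : UnifIntegrable (fun k => stoppedValue X (fun ω => dy k (τ ω))) 1 Q :=
    hUI.2.1.ae_eq (fun k => (hOS k).symm)
  -- pointwise convergence
  have hptwise : ∀ ω, Tendsto (fun k => stoppedValue X (fun ω' => dy k (τ ω')) ω) atTop
      (𝓝 (stoppedValue X (fun ω => (τ ω : WithTop ℝ≥0)) ω)) := fun ω =>
    tendsto_of_rc (fun s => X s ω) (τ ω) (hrc ω (τ ω)) (tendsto_dy (τ ω))
      (fun k => le_dy k (τ ω))
  -- measurability
  have hmeas : ∀ k, AEStronglyMeasurable (stoppedValue X (fun ω => dy k (τ ω))) Q :=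
    fun k => ((measurable_stoppedValue prog (hτk k)).mono
      ((hτk k).measurableSpace_le_of_le (fun ω => WithTop.coe_le_coe.mpr (hτkC k ω))) le_rfl
      ).stronglyMeasurable.aestronglyMeasurable
  have hmeasτ : AEStronglyMeasurable (stoppedValue X (fun ω => (τ ω : WithTop ℝ≥0))) Q :=
    ((measurable_stoppedValue prog hτ).mono
      (hτ.measurableSpace_le_of_le (fun ω => WithTop.coe_le_coe.mpr (hτC ω))) le_rfl).stronglyMeasurable.aestronglyMeasurable
  -- Memℒp of the limit by Fatou
  obtain ⟨R, hR⟩ := hUI.2.2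
  have hRk : ∀ k, eLpNorm (stoppedValue X (fun ω => dy k (τ ω))) 1 Q ≤ R := fun k => by
    rw [eLpNorm_congr_ae (hOS k)]; exact hR k
  have hmemℒp : MemLp (stoppedValue X (fun ω => (τ ω : WithTop ℝ≥0))) 1 Q := by
    refine ⟨hmeasτ, ?_⟩
    calc eLpNorm (stoppedValue X (fun ω => (τ ω : WithTop ℝ≥0))) 1 Q
        ≤ atTop.liminf (fun k => eLpNorm (stoppedValue X (fun ω => dy k (τ ω))) 1 Q) :=
          Lp.eLpNorm_lim_le_liminf_eLpNorm hmeas _ (Eventually.of_forall hptwise)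
      _ ≤ R := liminf_le_of_frequently_le (Frequently.of_forall hRk) (by isBoundedDefault)
      _ < ⊤ := ENNReal.coe_lt_top
  have hint : Integrable (stoppedValue X (fun ω => (τ ω : WithTop ℝ≥0))) Q := memLp_one_iff_integrable.mp hmemℒp
  refine ⟨hint, fun A => ?_⟩
  -- Vitali
  have hL1 : Tendsto (fun k => eLpNorm
      (stoppedValue X (fun ω => dy k (τ ω)) - stoppedValue X (fun ω => (τ ω : WithTop ℝ≥0))) 1 Q) atTop (𝓝 0) :=
    tendsto_Lp_finite_of_tendstoInMeasure le_rfl ENNReal.one_ne_top hmeas hmemℒp hUI'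
      (tendstoInMeasure_of_tendsto_ae hmeas (Eventually.of_forall hptwise))
  refine tendsto_integral_of_L1' (μ := Q.restrict A) (stoppedValue X (fun ω => (τ ω : WithTop ℝ≥0))) hint.integrableOn.aestronglyMeasurable
    (Eventually.of_forall fun k =>
      (integrable_condExp.congr (hOS k).symm).integrableOn) ?_
  refine tendsto_of_tendsto_of_tendsto_of_le_of_le tendsto_const_nhds hL1
    (fun k => zero_le) (fun k => eLpNorm_mono_measure _ Measure.restrict_le_self)


end Stmt14Aux

open Stmt14Aux

/-- A price process admitting an equivalent martingale measure
cannot exhibit predictable jumps: if `X` is a càdlàg adapted process which is a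
martingale under some `Q ~ P`, `T` is a bounded, a.s. strictly positive stopping
time with announcing sequence `ρ`, and both `{ΔX_T > 0}` and `{ΔX_T < 0}` belong
to `⋁ₙ 𝓕_{ρₙ}`, then `ΔX_T = 0` `P`-a.s. -/
theorem stmt14
    {Ω : Type*} {m : MeasurableSpace Ω}
    {P Q : Measure Ω} [IsProbabilityMeasure P] [IsProbabilityMeasure Q]
    (hPQ : P ≪ Q) (hQP : Q ≪ P)
    (F : Filtration ℝ≥0 m)
    (X Xm : ℝ≥0 → Ω → ℝ)
    (hadapted : Adapted F X)
    -- càdlàg paths: right-continuity and existence of (finite) left limits `Xm`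
    (hrc : ∀ ω, ∀ t : ℝ≥0, Tendsto (fun s => X s ω) (𝓝[>] t) (𝓝 (X t ω)))
    (hll : ∀ ω, ∀ t : ℝ≥0, 0 < t → Tendsto (fun s => X s ω) (𝓝[<] t) (𝓝 (Xm t ω)))
    -- `X` is a martingale under `Q` with respect to `F`
    (hmart : Martingale X F Q)
    (T : Ω → ℝ≥0) (hT : IsStoppingTime F (fun ω => (T ω : WithTop ℝ≥0)))
    (hTbdd : ∃ C : ℝ≥0, ∀ ω, T ω ≤ C)
    (hTpos : ∀ᵐ ω ∂P, 0 < T ω)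
    -- announcing sequence for `T`
    (ρ : ℕ → Ω → ℝ≥0) (hρ : ∀ n, IsStoppingTime F (fun ω => (ρ n ω : WithTop ℝ≥0)))
    (hρmono : ∀ n, ∀ ω, ρ n ω ≤ ρ (n + 1) ω)
    (hρlt : ∀ᵐ ω ∂P, ∀ n, ρ n ω < T ω)
    (hρlim : ∀ᵐ ω ∂P, Tendsto (fun n => ρ n ω) atTop (𝓝 (T ω)))
    -- predictability of the direction of the jump
    (hpos : MeasurableSet[⨆ n, (hρ n).measurableSpace]
      {ω | 0 < X (T ω) ω - Xm (T ω) ω})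
    (hneg : MeasurableSet[⨆ n, (hρ n).measurableSpace]
      {ω | X (T ω) ω - Xm (T ω) ω < 0}) :
    ∀ᵐ ω ∂P, X (T ω) ω - Xm (T ω) ω = 0 := by
  classical
  obtain ⟨C, hC⟩ := hTbdd
  have prog : ProgMeasurable F X := progMeasurable_of_rc F X hadapted hrc
  -- the announcing sequence capped at T
  set σf : ℕ → Ω → ℝ≥0 := fun n ω => min (ρ n ω) (T ω) with hσf
  have hσ : ∀ n, IsStoppingTime F (fun ω => (σf n ω : WithTop ℝ≥0)) := fun n => (hρ n).min hT
  have hρmono' : ∀ {n p : ℕ}, n ≤ p → ∀ ω, ρ n ω ≤ ρ p ω := by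
    intro n p h ω
    exact monotone_nat_of_le_succ (f := fun k => ρ k ω) (fun k => hρmono k ω) h
  have hσmono : ∀ {n p : ℕ}, n ≤ p → σf n ≤ σf p := fun {n p} h ω =>
    min_le_min (hρmono' h ω) le_rfl
  have hσleT : ∀ n ω, σf n ω ≤ T ω := fun n ω => min_le_right _ _
  have hσleC : ∀ n ω, σf n ω ≤ C := fun n ω => (hσleT n ω).trans (hC ω)
  set G : Filtration ℕ m := ⟨fun n => (hσ n).measurableSpace,
    fun n p h => IsStoppingTime.measurableSpace_mono _ _ (fun ω => WithTop.coe_le_coe.mpr (hσmono h ω)),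
    fun n => (hσ n).measurableSpace_le_of_le (fun ω => WithTop.coe_le_coe.mpr (hσleC n ω))⟩ with hG
  set g : Ω → ℝ := stoppedValue X (fun ω => (T ω : WithTop ℝ≥0)) with hgdef
  have hgInt : Integrable g Q := (vitali_aux prog hmart hrc hT hC).1
  -- optional sampling for continuous time
  have keyEq : ∀ (τ π : Ω → ℝ≥0) (hτ' : IsStoppingTime F (fun ω => (τ ω : WithTop ℝ≥0)))
      (hπ' : IsStoppingTime F (fun ω => (π ω : WithTop ℝ≥0))),
      (∀ ω, τ ω ≤ π ω) → (∀ ω, π ω ≤ C) → ∀ A : Set Ω,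
      MeasurableSet[hτ'.measurableSpace] A →
      ∫ x in A, stoppedValue X (fun ω => (τ ω : WithTop ℝ≥0)) x ∂Q =
        ∫ x in A, stoppedValue X (fun ω => (π ω : WithTop ℝ≥0)) x ∂Q := by
    intro τ π hτ' hπ' hle hπC A hA
    have hτC' : ∀ ω, τ ω ≤ C := fun ω => (hle ω).trans (hπC ω)
    have h1 := (vitali_aux prog hmart hrc hτ' hτC').2 A
    have h2 := (vitali_aux prog hmart hrc hπ' hπC).2 A
    have heq : ∀ k, ∫ x in A, stoppedValue X (fun ω => dy k (τ ω)) x ∂Q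
        = ∫ x in A, stoppedValue X (fun ω => dy k (π ω)) x ∂Q := by
      intro k
      have hτk := dy_isStoppingTime hτ' k
      have hπk := dy_isStoppingTime hπ' k
      have hπkC : ∀ ω, dy k (π ω) ≤ C + 1 := fun ω =>
        (dy_le_add_one _ _).trans (add_le_add_left (hπC ω) 1)
      have hlek : ∀ ω, dy k (τ ω) ≤ dy k (π ω) := fun ω => dy_mono k (hle ω)
      have hτkC : ∀ ω, dy k (τ ω) ≤ C + 1 := fun ω => (hlek ω).trans (hπkC ω)
      have hOS := hmart.stoppedValue_ae_eq_condExp_of_le_of_countable_range hπk hτk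
        (fun ω => WithTop.coe_le_coe.mpr (hlek ω)) (fun ω => WithTop.coe_le_coe.mpr (hπkC ω)) (dy_countable_range π k) (dy_countable_range τ k)
      have hA' : MeasurableSet[hτk.measurableSpace] A :=
        IsStoppingTime.measurableSpace_mono hτ' hτk (fun ω => WithTop.coe_le_coe.mpr (le_dy k (τ ω))) _ hA
      calc ∫ x in A, stoppedValue X (fun ω => dy k (τ ω)) x ∂Q
          = ∫ x in A, (Q[stoppedValue X (fun ω => dy k (π ω))|hτk.measurableSpace]) x ∂Q :=
            integral_congr_ae (ae_restrict_of_ae hOS)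
        _ = ∫ x in A, stoppedValue X (fun ω => dy k (π ω)) x ∂Q :=
            setIntegral_condExp (hτk.measurableSpace_le_of_le (fun ω => WithTop.coe_le_coe.mpr (hτkC ω)))
              (vitali_aux prog hmart hrc hπk hπkC).1 hA'
    exact tendsto_nhds_unique (h1.congr heq) h2
  -- identification of the stopped values with conditional expectations
  have hXσ_eq : ∀ n, stoppedValue X (fun ω => (σf n ω : WithTop ℝ≥0)) =ᵐ[Q] Q[g|G n] := by
    intro n
    refine ae_eq_condExp_of_forall_setIntegral_eq (G.le n) hgInt
      (fun s _ _ => ((vitali_aux prog hmart hrc (hσ n) (hσleC n)).1).integrableOn)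
      (fun s hs _ => keyEq (σf n) T (hσ n) hT (hσleT n) hC s hs) ?_
    exact StronglyMeasurable.aestronglyMeasurable
      (Measurable.stronglyMeasurable (measurable_stoppedValue prog (hσ n)))
  -- Lévy's upward theorem
  have hLevy : ∀ᵐ x ∂Q, Tendsto (fun n => (Q[g|G n]) x) atTop (𝓝 ((Q[g|⨆ n, G n]) x)) :=
    tendsto_ae_condExp g
  have hXmQ : (fun ω => Xm (T ω) ω) =ᵐ[Q] Q[g|⨆ n, G n] := by
    filter_upwards [hLevy, hQP.ae_le hρlt, hQP.ae_le hρlim, hQP.ae_le hTpos,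
      ae_all_iff.2 hXσ_eq] with ω h1 h2 h3 h4 h5
    have hσω : ∀ n, σf n ω = ρ n ω := fun n => min_eq_left (h2 n).le
    have hXρ : Tendsto (fun n => X (ρ n ω) ω) atTop (𝓝 (Xm (T ω) ω)) :=
      (hll ω (T ω) h4).comp (tendsto_nhdsWithin_of_tendsto_nhds_of_eventually_within _ h3
        (Eventually.of_forall fun n => h2 n))
    have h1' : Tendsto (fun n => X (ρ n ω) ω) atTop (𝓝 ((Q[g|⨆ n, G n]) ω)) := by
      refine h1.congr fun n => ?_
      rw [← h5 n]
      exact congrArg (fun t => X t ω) (hσω n)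
    exact tendsto_nhds_unique hXρ h1'
  have hXmInt : Integrable (fun ω => Xm (T ω) ω) Q := integrable_condExp.congr hXmQ.symm
  -- the sigma-algebras
  have hρle : ∀ n, (hρ n).measurableSpace ≤ m := fun n => (hρ n).measurableSpace_le
  have hMle : (⨆ n, (hρ n).measurableSpace) ≤ m := iSup_le hρle
  have hGsup_le : (⨆ n, (G n : MeasurableSpace Ω)) ≤ m := iSup_le fun n => G.le n
  have hQρlt := hQP.ae_le hρlt
  -- the main set-integral identity on the predictable sigma-algebra
  have hbasic : ∀ t ∈ {s : Set Ω | ∃ n, MeasurableSet[(hρ n).measurableSpace] s},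
      ∫ x in t, g x ∂Q = ∫ x in t, Xm (T x) x ∂Q := by
    rintro t ⟨n, ht⟩
    set t' := t ∩ {ω | (ρ n ω : WithTop ℝ≥0) ≤ T ω} with ht'def
    have ht' : MeasurableSet[(G n : MeasurableSpace Ω)] t' :=
      (hρ n).measurableSet_inter_le hT t ht
    have hteq : t =ᵐ[Q] t' := by
      refine Filter.eventuallyEq_set.2 ?_
      filter_upwards [hQρlt] with ω hω
      simp [ht'def]
      exact fun _ => WithTop.coe_le_coe.mpr (hω n).le
    have ht'' : MeasurableSet[⨆ k, (G k : MeasurableSpace Ω)] t' :=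
      (le_iSup (fun k => (G k : MeasurableSpace Ω)) n) t' ht'
    calc ∫ x in t, g x ∂Q = ∫ x in t', g x ∂Q := setIntegral_congr_set hteq
      _ = ∫ x in t', (Q[g|⨆ k, G k]) x ∂Q := (setIntegral_condExp hGsup_le hgInt ht'').symm
      _ = ∫ x in t', Xm (T x) x ∂Q :=
          integral_congr_ae (ae_restrict_of_ae hXmQ.symm)
      _ = ∫ x in t, Xm (T x) x ∂Q := (setIntegral_congr_set hteq).symm
  have main : ∀ s : Set Ω, MeasurableSet[⨆ n, (hρ n).measurableSpace] s →
      ∫ x in s, g x ∂Q = ∫ x in s, Xm (T x) x ∂Q := by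
    have hpi : IsPiSystem {s : Set Ω | ∃ n, MeasurableSet[(hρ n).measurableSpace] s} := by
      rintro s ⟨n, hs⟩ u ⟨p, hu⟩ -
      refine ⟨max n p, MeasurableSet.inter ?_ ?_⟩
      · exact IsStoppingTime.measurableSpace_mono _ _
          (fun ω => WithTop.coe_le_coe.mpr (hρmono' (le_max_left n p) ω)) _ hs
      · exact IsStoppingTime.measurableSpace_mono _ _
          (fun ω => WithTop.coe_le_coe.mpr (hρmono' (le_max_right n p) ω)) _ hu
    intro s hs
    refine @MeasurableSpace.induction_on_inter Ω
      (⨆ n, (hρ n).measurableSpace)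
      (fun s _ => ∫ x in s, g x ∂Q = ∫ x in s, Xm (T x) x ∂Q)
      {s : Set Ω | ∃ n, MeasurableSet[(hρ n).measurableSpace] s}
      (MeasurableSpace.measurableSpace_iSup_eq _) hpi (by simp) hbasic ?_ ?_ s hs
    · intro u hu hInd
      have huniv := hbasic univ ⟨0, MeasurableSet.univ⟩
      have h1 := integral_add_compl (hMle _ hu) hgInt
      have h2 := integral_add_compl (hMle _ hu) hXmInt
      rw [setIntegral_univ, setIntegral_univ] at huniv
      linarith
    · intro f hdisj hmeas hInd
      rw [integral_iUnion (fun i => hMle _ (hmeas i)) hdisj hgInt.integrableOn,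
        integral_iUnion (fun i => hMle _ (hmeas i)) hdisj hXmInt.integrableOn]
      exact tsum_congr hInd
  -- conclude
  have hDint : Integrable (fun ω => g ω - Xm (T ω) ω) Q := hgInt.sub hXmInt
  have hzero : ∀ A : Set Ω, MeasurableSet[⨆ n, (hρ n).measurableSpace] A →
      ∫ x in A, (g x - Xm (T x) x) ∂Q = 0 := by
    intro A hA
    rw [integral_sub hgInt.integrableOn hXmInt.integrableOn, main A hA, sub_self]
  have hposQ : Q {ω | 0 < X (T ω) ω - Xm (T ω) ω} = 0 := by
    have hAm : MeasurableSet {ω | 0 < X (T ω) ω - Xm (T ω) ω} := hMle _ hpos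
    have h0 := hzero _ hpos
    have hnonneg : 0 ≤ᵐ[Q.restrict {ω | 0 < X (T ω) ω - Xm (T ω) ω}]
        fun ω => g ω - Xm (T ω) ω := by
      filter_upwards [ae_restrict_mem hAm] with ω hω
      exact le_of_lt hω
    have heq0 := (integral_eq_zero_iff_of_nonneg_ae hnonneg hDint.integrableOn).mp h0
    have hfalse : ∀ᵐ ω ∂(Q.restrict {ω | 0 < X (T ω) ω - Xm (T ω) ω}), False := by
      filter_upwards [heq0, ae_restrict_mem hAm] with ω h1 h2
      simp only [Pi.zero_apply] at h1
      have hg : g ω = X (T ω) ω := rfl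
      rw [hg] at h1
      exact absurd h1 (ne_of_gt h2)
    rw [ae_iff] at hfalse
    simpa using hfalse
  have hnegQ : Q {ω | X (T ω) ω - Xm (T ω) ω < 0} = 0 := by
    have hAm : MeasurableSet {ω | X (T ω) ω - Xm (T ω) ω < 0} := hMle _ hneg
    have h0 : ∫ x in {ω | X (T ω) ω - Xm (T ω) ω < 0}, (Xm (T x) x - g x) ∂Q = 0 := by
      rw [integral_sub hXmInt.integrableOn hgInt.integrableOn, main _ hneg, sub_self]
    have hnonneg : 0 ≤ᵐ[Q.restrict {ω | X (T ω) ω - Xm (T ω) ω < 0}]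
        fun ω => Xm (T ω) ω - g ω := by
      filter_upwards [ae_restrict_mem hAm] with ω hω
      have hg : g ω = X (T ω) ω := rfl
      simp only [Pi.zero_apply, hg]
      linarith
    have heq0 := (integral_eq_zero_iff_of_nonneg_ae hnonneg
      (hXmInt.sub hgInt).integrableOn).mp h0
    have hfalse : ∀ᵐ ω ∂(Q.restrict {ω | X (T ω) ω - Xm (T ω) ω < 0}), False := by
      filter_upwards [heq0, ae_restrict_mem hAm] with ω h1 h2
      simp only [Pi.zero_apply] at h1
      have hg : g ω = X (T ω) ω := rfl
      rw [hg] at h1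
      linarith
    rw [ae_iff] at hfalse
    simpa using hfalse
  have hne : Q {ω | X (T ω) ω - Xm (T ω) ω ≠ 0} = 0 := by
    refine measure_mono_null ?_ (measure_union_null hposQ hnegQ)
    intro ω hω
    rcases lt_or_gt_of_ne hω with h | h
    · exact Or.inr h
    · exact Or.inl h
  have hP : P {ω | X (T ω) ω - Xm (T ω) ω ≠ 0} = 0 := hPQ hne
  exact ae_iff.mpr hP
end

section
/- Let X be a càdlàg adapted real-valued process with respect to a filtration satisfying the usual conditions, and let T be a strictly positive, finite-valued stopping time admitting an announcing sequence, such that ΔX_T ≠ 0 a.s. and {ΔX_T > 0} belongs to ⋁_n 𝓕_{ρ_n} for an announcing sequence (ρ_n) of T. Let N > 0 and C ≥ 1 be constants such that A := {T ≤ N, |X_{T−}| ≤ C, ΔX_T > 0} has P(A) > 0. Then there exist bounded stopping times σ_n ≤ τ_n and 𝓕_{σ_n}-measurable random variables ξ_n with ξ_n ∈ [0,1] a.s., such that: (i) for every t ≥ 0, ξ_n·(X_{τ_n∧t} − X_{σ_n∧t}) → ΔX_T·1_A·1_{T≤t} a.s. (a sure profit on A); and (ii) almost surely on A, for every n ≥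 N, ξ_n·(X_{τ_n} − X_{σ_n}) ≥ −2C (the losses of each buy-and-hold component are uniformly bounded). -/
open MeasureTheory Filter Set
open scoped NNReal Topology

private lemma stmt16_aux_bound {ξ x y Cc : ℝ} (hC : 1 ≤ Cc) (hξ0 : 0 ≤ ξ)
    (hξle : ξ ≤ min 1 (max 0 (Cc + 1 - x))) (hy : -Cc ≤ y) :
    -(2 * Cc) ≤ ξ * (y - x) := by
  have hξ1 : ξ ≤ 1 := hξle.trans (min_le_left _ _)
  have hξ2 : ξ ≤ max 0 (Cc + 1 - x) := hξle.trans (min_le_right _ _)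
  rcases le_or_gt 0 (y - x) with h | h
  · nlinarith
  rcases le_or_gt x Cc with hx | hx
  · nlinarith
  rcases le_or_gt (Cc + 1) x with hx2 | hx2
  · have h0 : ξ ≤ 0 := by
      rwa [max_eq_left (by linarith)] at hξ2
    have : ξ = 0 := le_antisymm h0 hξ0
    rw [this]; nlinarith
  · have hξ3 : ξ ≤ Cc + 1 - x := by rwa [max_eq_right (by linarith)] at hξ2
    nlinarith [mul_nonneg (sub_nonneg.2 hξ3) (by linarith : (0:ℝ) ≤ x - y),
      mul_nonneg hξ0 (by linarith : (0:ℝ) ≤ x - Cc)]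

private lemma stmt16_dyadic_tendsto (u : ℝ≥0) :
    Tendsto (fun k : ℕ => ((⌈(u : ℝ) * 2 ^ k⌉₊ : ℝ≥0) / 2 ^ k)) atTop (𝓝 u) := by
  rw [← NNReal.tendsto_coe]
  have hle : ∀ k : ℕ, (u : ℝ) ≤ ((((⌈(u : ℝ) * 2 ^ k⌉₊ : ℝ≥0) / 2 ^ k : ℝ≥0)) : ℝ) := by
    intro k
    rw [NNReal.coe_div]
    rw [le_div_iff₀ (by positivity)]
    push_cast
    exact Nat.le_ceil _
  have hub : ∀ k : ℕ, ((((⌈(u : ℝ) * 2 ^ k⌉₊ : ℝ≥0) / 2 ^ k : ℝ≥0)) : ℝ) ≤ u + (1 / 2) ^ k := by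
    intro k
    rw [NNReal.coe_div, div_le_iff₀ (by positivity)]
    push_cast
    have := Nat.ceil_lt_add_one (by positivity : (0:ℝ) ≤ (u : ℝ) * 2 ^ k)
    have h2 : ((1:ℝ)/2) ^ k * 2 ^ k = 1 := by
      rw [← mul_pow]; norm_num
    nlinarith [this]
  have h1 : Tendsto (fun k : ℕ => (u : ℝ) + (1 / 2) ^ k) atTop (𝓝 ((u : ℝ) + 0)) :=
    tendsto_const_nhds.add (tendsto_pow_atTop_nhds_zero_of_lt_one (by norm_num) (by norm_num))
  rw [add_zero] at h1
  exact tendsto_of_tendsto_of_tendsto_of_le_of_le tendsto_const_nhds h1 hle hub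

private lemma stmt16_dyadic_ge (u : ℝ≥0) (k : ℕ) :
    u ≤ ((⌈(u : ℝ) * 2 ^ k⌉₊ : ℝ≥0) / 2 ^ k) := by
  rw [← NNReal.coe_le_coe, NNReal.coe_div, le_div_iff₀ (by positivity)]
  push_cast
  exact Nat.le_ceil _

private lemma stmt16_progMeasurable {Ω : Type*} {m : MeasurableSpace Ω}
    (F : Filtration ℝ≥0 m) (X : ℝ≥0 → Ω → ℝ) (hadapted : Adapted F X)
    (hrc : ∀ ω, ∀ t : ℝ≥0, Tendsto (fun s => X s ω) (𝓝[>] t) (𝓝 (X t ω))) :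
    ProgMeasurable F X := by
  intro i
  classical
  set d : ℕ → ℝ≥0 → ℝ≥0 := fun k u => min ((⌈(u : ℝ) * 2 ^ k⌉₊ : ℝ≥0) / 2 ^ k) i with hd
  have hd_mono : ∀ k, Monotone (fun u : ℝ≥0 => ((⌈(u : ℝ) * 2 ^ k⌉₊ : ℝ≥0) / 2 ^ k)) := by
    intro k a b hab
    have h1 : ⌈(a : ℝ) * 2 ^ k⌉₊ ≤ ⌈(b : ℝ) * 2 ^ k⌉₊ :=
      Nat.ceil_le_ceil (mul_le_mul_of_nonneg_right (NNReal.coe_le_coe.2 hab) (by positivity))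
    simp only []
    rw [div_eq_mul_inv, div_eq_mul_inv]
    exact mul_le_mul_left (by exact_mod_cast h1) _
  have hd_meas : ∀ k, Measurable (d k) := fun k =>
    ((hd_mono k).measurable).min measurable_const
  have hVk : ∀ k : ℕ, StronglyMeasurable[Subtype.instMeasurableSpace.prod (F i)]
      (fun p : Set.Iic i × Ω => X (d k p.1) p.2) := by
    intro k
    set R : Set ℝ≥0 :=
      insert i ((Set.range fun n : ℕ => ((n : ℝ≥0) / 2 ^ k)) ∩ Set.Iic i) with hR
    have hRc : R.Countable := (((Set.countable_range _).mono inter_subset_left).insert i)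
    haveI := hRc.to_subtype
    have hmem : ∀ u : ℝ≥0, d k u ∈ R := by
      intro u
      rcases le_total ((⌈(u : ℝ) * 2 ^ k⌉₊ : ℝ≥0) / 2 ^ k) i with h | h
      · have hda : d k u = (⌈(u : ℝ) * 2 ^ k⌉₊ : ℝ≥0) / 2 ^ k := min_eq_left h
        rw [hR, hda]
        exact Set.mem_insert_iff.2 (Or.inr ⟨⟨_, rfl⟩, h⟩)
      · have hda : d k u = i := min_eq_right h
        rw [hR, hda]
        exact Set.mem_insert _ _
    have hRle : ∀ v : R, (v : ℝ≥0) ≤ i := by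
      rintro ⟨v, hv | hv⟩
      · exact hv.le
      · exact hv.2
    have hg : @Measurable (Set.Iic i) R Subtype.instMeasurableSpace _
        (fun u : Set.Iic i => (⟨d k u, hmem u⟩ : R)) :=
      ((hd_meas k).comp measurable_subtype_coe).subtype_mk
    have hsec : ∀ v : R, Measurable[F i] (fun ω => X (v : ℝ≥0) ω) := fun v =>
      (hadapted (v : ℝ≥0)).mono (F.mono (hRle v)) le_rfl
    have hφ : @Measurable (Ω × R) ℝ (MeasurableSpace.prod (F i) _) _
        (fun q : Ω × R => X (q.2 : ℝ≥0) q.1) :=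
      measurable_from_prod_countable_left (m := F i) hsec
    have : (fun p : Set.Iic i × Ω => X (d k p.1) p.2)
        = (fun q : Ω × R => X (q.2 : ℝ≥0) q.1)
          ∘ (fun p : Set.Iic i × Ω => (p.2, (⟨d k p.1, hmem p.1⟩ : R))) := rfl
    rw [this]
    have hsnd : @Measurable (Set.Iic i × Ω) Ω (Subtype.instMeasurableSpace.prod (F i)) (F i)
        Prod.snd := @measurable_snd _ _ Subtype.instMeasurableSpace (F i)
    have hfst : @Measurable (Set.Iic i × Ω) (Set.Iic i)
        (Subtype.instMeasurableSpace.prod (F i)) _ Prod.fst :=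
      @measurable_fst _ _ Subtype.instMeasurableSpace (F i)
    exact (hφ.comp (hsnd.prodMk (hg.comp hfst))).stronglyMeasurable
  refine @stronglyMeasurable_of_tendsto (Set.Iic i × Ω) ℝ ℕ
    (Subtype.instMeasurableSpace.prod (F i)) _ _ atTop _ _
    (fun k p => X (d k p.1) p.2) (fun p : Set.Iic i × Ω => X p.1 p.2) hVk ?_
  rw [tendsto_pi_nhds]
  intro p
  have hui : (p.1 : ℝ≥0) ≤ i := p.1.2
  have hdt : Tendsto (fun k => d k p.1) atTop (𝓝 (p.1 : ℝ≥0)) := by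
    have := (stmt16_dyadic_tendsto (p.1 : ℝ≥0)).min (tendsto_const_nhds (x := i))
    rwa [min_eq_left hui] at this
  have hge : ∀ k, (p.1 : ℝ≥0) ≤ d k p.1 := fun k =>
    le_min (stmt16_dyadic_ge _ k) hui
  have hIci : Tendsto (fun s => X s p.2) (𝓝[Set.Ici (p.1 : ℝ≥0)] (p.1 : ℝ≥0)) (𝓝 (X p.1 p.2)) :=
    continuousWithinAt_Ioi_iff_Ici.1 (hrc p.2 p.1)
  exact hIci.comp (tendsto_nhdsWithin_iff.2 ⟨hdt, Eventually.of_forall fun k => hge k⟩)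

/-- A predictable jump yields a sure profit via a flash
strategy whose buy-and-hold components have uniformly bounded losses: on
`A := {T ≤ N, |X_{T−}| ≤ C, ΔX_T > 0}` (of positive probability), there are
bounded stopping times `σₙ ≤ τₙ` and `𝓕_{σₙ}`-measurable positions `ξₙ ∈ [0,1]`
whose gains converge a.s. to `ΔX_T·1_A·1_{T≤t}` for every `t ≥ 0`, and a.s. on
`A` the gains `ξₙ·(X_{τₙ} − X_{σₙ})` are bounded below by `−2C` for all `n ≥ N`. -/
theorem stmt16
    {Ω : Type*} {m : MeasurableSpace Ω} {P : Measure Ω} [IsProbabilityMeasure P]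
    (F : Filtration ℝ≥0 m)
    -- usual conditions: right-continuity and completeness
    (husual_rc : ∀ t : ℝ≥0, F t = ⨅ (s : ℝ≥0) (_ : t < s), F s)
    (husual_compl : ∀ A : Set Ω, MeasurableSet A → P A = 0 → MeasurableSet[F 0] A)
    (X Xm : ℝ≥0 → Ω → ℝ)
    (hadapted : Adapted F X)
    -- càdlàg paths: right-continuity and existence of (finite) left limits `Xm`
    (hrc : ∀ ω, ∀ t : ℝ≥0, Tendsto (fun s => X s ω) (𝓝[>] t) (𝓝 (X t ω)))
    (hll : ∀ ω, ∀ t : ℝ≥0, 0 < t → Tendsto (fun s => X s ω) (𝓝[<] t) (𝓝 (Xm t ω)))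
    (T : Ω → ℝ≥0) (hT : IsStoppingTime F (fun ω => (T ω : WithTop ℝ≥0)))
    (hTpos : ∀ᵐ ω ∂P, 0 < T ω)
    -- announcing sequence for `T`
    (ρ : ℕ → Ω → ℝ≥0) (hρ : ∀ n, IsStoppingTime F (fun ω => (ρ n ω : WithTop ℝ≥0)))
    (hρmono : ∀ n, ∀ ω, ρ n ω ≤ ρ (n + 1) ω)
    (hρlt : ∀ᵐ ω ∂P, ∀ n, ρ n ω < T ω)
    (hρlim : ∀ᵐ ω ∂P, Tendsto (fun n => ρ n ω) atTop (𝓝 (T ω)))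
    -- the jump at `T` is a.s. nonzero and its sign is `⋁ₙ 𝓕_{ρₙ}`-measurable
    (hjump : ∀ᵐ ω ∂P, X (T ω) ω - Xm (T ω) ω ≠ 0)
    (hpred : MeasurableSet[⨆ n, (hρ n).measurableSpace]
      {ω | 0 < X (T ω) ω - Xm (T ω) ω})
    (N : ℝ≥0) (hN : 0 < N) (C : ℝ) (hC : 1 ≤ C)
    (A : Set Ω)
    (hA : A = {ω | T ω ≤ N ∧ |Xm (T ω) ω| ≤ C ∧ 0 < X (T ω) ω - Xm (T ω) ω})
    (hApos : 0 < P A) :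
    ∃ (σ τ' : ℕ → Ω → ℝ≥0) (ξ : ℕ → Ω → ℝ) (hσ : ∀ n, IsStoppingTime F (fun ω => (σ n ω : WithTop ℝ≥0))),
      (∀ n, IsStoppingTime F (fun ω => (τ' n ω : WithTop ℝ≥0))) ∧
      (∀ n, ∃ Cb : ℝ≥0, ∀ ω, τ' n ω ≤ Cb) ∧
      (∀ n, ∀ ω, σ n ω ≤ τ' n ω) ∧
      (∀ n, Measurable[(hσ n).measurableSpace] (ξ n)) ∧
      (∀ n, ∀ᵐ ω ∂P, 0 ≤ ξ n ω ∧ ξ n ω ≤ 1) ∧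
      -- (i) sure profit on `A`
      (∀ t : ℝ≥0, ∀ᵐ ω ∂P,
        Tendsto (fun n =>
            ξ n ω * (X (min (τ' n ω) t) ω - X (min (σ n ω) t) ω)) atTop
          (𝓝 ((X (T ω) ω - Xm (T ω) ω) * A.indicator (fun _ => (1 : ℝ)) ω
            * (if T ω ≤ t then (1 : ℝ) else 0)))) ∧
      -- (ii) uniformly bounded losses on `A`
      (∀ᵐ ω ∂P, ω ∈ A → ∀ n : ℕ, N ≤ (n : ℝ≥0) →
        ξ n ω * (X (τ' n ω) ω - X (σ n ω) ω) ≥ -(2 * C)) := by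
  classical
  have hρmono' : ∀ {a b : ℕ}, a ≤ b → ∀ ω, ρ a ω ≤ ρ b ω := fun {a b} hab ω =>
    (monotone_nat_of_le_succ (fun k => hρmono k ω) : Monotone fun k => ρ k ω) hab
  set σ' : ℕ → Ω → ℝ≥0 := fun n ω => min (ρ n ω) n with hσ'def
  set τ'' : ℕ → Ω → ℝ≥0 := fun n ω => min (max (ρ n ω) (T ω)) n with hτ''def
  have hσst : ∀ n, IsStoppingTime F (fun ω => (σ' n ω : WithTop ℝ≥0)) := fun n => by
    have := (hρ n).min_const (n : ℝ≥0)
    convert this using 2 with ω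
    exact WithTop.coe_min _ _
  have hτst : ∀ n, IsStoppingTime F (fun ω => (τ'' n ω : WithTop ℝ≥0)) := fun n => by
    have := ((hρ n).max hT).min_const (n : ℝ≥0)
    convert this using 2 with ω
    show ((min (max (ρ n ω) (T ω)) (n : ℝ≥0) : ℝ≥0) : WithTop ℝ≥0) = _
    rw [WithTop.coe_min, WithTop.coe_max]
  have hσmono : ∀ {a b : ℕ}, a ≤ b → ∀ ω, σ' a ω ≤ σ' b ω := fun {a b} hab ω =>
    min_le_min (hρmono' hab ω) (by exact_mod_cast Nat.cast_le.2 hab)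
  set 𝒢 : Filtration ℕ m :=
    ⟨fun n => (hσst n).measurableSpace,
     fun a b hab => IsStoppingTime.measurableSpace_mono _ _ (fun ω => WithTop.coe_le_coe.2 (hσmono hab ω)),
     fun n => (hσst n).measurableSpace_le⟩ with h𝒢
  -- the σ-algebra generated by the announcing sequence is contained in ⨆ n, 𝒢 n
  have hGsub : ∀ n, (hρ n).measurableSpace ≤ ⨆ k, (hσst k).measurableSpace := by
    intro n s hs
    have hcover : s = ⋃ k : ℕ, (s ∩ {ω | ρ n ω ≤ ((max n k : ℕ) : ℝ≥0)}) := by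
      ext ω
      simp only [Set.mem_iUnion, Set.mem_inter_iff, Set.mem_setOf_eq]
      refine ⟨fun hω => ?_, fun ⟨k, hk, _⟩ => hk⟩
      obtain ⟨k, hk⟩ := exists_nat_ge (ρ n ω)
      refine ⟨k, hω, hk.trans ?_⟩
      exact_mod_cast Nat.le_max_right n k
    rw [hcover]
    refine MeasurableSet.iUnion fun k => ?_
    have h1 : MeasurableSet[((hρ n).min_const ((max n k : ℕ) : ℝ≥0)).measurableSpace]
        (s ∩ {ω | ρ n ω ≤ ((max n k : ℕ) : ℝ≥0)}) := by
        have hset : {ω | ρ n ω ≤ ((max n k : ℕ) : ℝ≥0)}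
            = {ω | (ρ n ω : WithTop ℝ≥0) ≤ (((max n k : ℕ) : ℝ≥0) : WithTop ℝ≥0)} := by
          ext ω; simp only [Set.mem_setOf_eq, WithTop.coe_le_coe]
        rw [hset]
        exact ((hρ n).measurableSet_inter_le_const_iff s _).1
          (hs.inter ((hρ n).measurableSet_le' _))
    have h2 : ((hρ n).min_const ((max n k : ℕ) : ℝ≥0)).measurableSpace
        ≤ (hσst (max n k)).measurableSpace := by
      refine IsStoppingTime.measurableSpace_mono _ _ fun ω => ?_
      rw [← WithTop.coe_min]
      exact WithTop.coe_le_coe.2 (min_le_min (hρmono' (Nat.le_max_left n k) ω) le_rfl)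
    exact (le_iSup (fun k : ℕ => (hσst k).measurableSpace) (max n k)) _ (h2 _ h1)
  -- measurability of stopped values
  have hprog : ProgMeasurable F X := stmt16_progMeasurable F X hadapted hrc
  have hXσ : ∀ n, Measurable[(hσst n).measurableSpace] (fun ω => X (σ' n ω) ω) := fun n =>
    measurable_stoppedValue hprog (hσst n)
  -- the target event, measurable w.r.t. ⨆ n, 𝒢 n
  set G : Set Ω := {ω | 0 < X (T ω) ω - Xm (T ω) ω} with hGdef
  set B1 : Set Ω := ⋂ n : ℕ, {ω | σ' n ω ≤ N} with hB1def
  set B2 : Set Ω := ⋂ k : ℕ, ⋃ n : ℕ, ⋂ m : ℕ, ⋂ (_ : n ≤ m),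
      {ω | |X (σ' m ω) ω| < C + 1 / ((k : ℝ) + 1)} with hB2def
  set B : Set Ω := (B1 ∩ B2) ∩ G with hBdef
  have hsub : ∀ n, (hσst n).measurableSpace ≤ ⨆ k, (hσst k).measurableSpace := fun n =>
    le_iSup (fun k : ℕ => (hσst k).measurableSpace) n
  have hB1m : MeasurableSet[⨆ k, (hσst k).measurableSpace] B1 :=
    MeasurableSet.iInter fun n =>
      hsub n _ (by simpa only [WithTop.coe_le_coe] using (hσst n).measurableSet_le' N)
  have hB2m : MeasurableSet[⨆ k, (hσst k).measurableSpace] B2 :=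
    MeasurableSet.iInter fun k => MeasurableSet.iUnion fun n =>
      MeasurableSet.iInter fun mm => MeasurableSet.iInter fun _ =>
        hsub mm _ ((measurable_abs.comp (hXσ mm)) measurableSet_Iio)
  have hBm : MeasurableSet[⨆ k, (hσst k).measurableSpace] B :=
    ((hB1m.inter hB2m).inter ((iSup_le hGsub : _ ≤ _) _ hpred))
  have hleSup : (⨆ k, (hσst k).measurableSpace) ≤ m :=
    iSup_le fun n => (hσst n).measurableSpace_le
  have hBm' : MeasurableSet B := hleSup _ hBm
  -- conditional expectations
  set f : Ω → ℝ := B.indicator (fun _ => (1 : ℝ)) with hfdef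
  have hint : Integrable f P := (integrable_const (1 : ℝ)).indicator hBm'
  have hsm : StronglyMeasurable[⨆ n, (𝒢 n : MeasurableSpace Ω)] f := by
    exact (stronglyMeasurable_const.indicator hBm)
  have hLevy : ∀ᵐ ω ∂P, Tendsto (fun n => (P[f|𝒢 n]) ω) atTop (𝓝 (f ω)) :=
    hint.tendsto_ae_condExp hsm
  -- the positions
  set ξ : ℕ → Ω → ℝ := fun n ω =>
    max 0 (min 1 ((P[f|𝒢 n]) ω)) * min 1 (max 0 (C + 1 - X (σ' n ω) ω)) with hξdef
  have hξmeas : ∀ n, Measurable[(hσst n).measurableSpace] (ξ n) := by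
    intro n
    have h1 : Measurable[(hσst n).measurableSpace] (P[f|𝒢 n]) := by
      exact stronglyMeasurable_condExp.measurable
    exact (measurable_const.max (measurable_const.min h1)).mul
      (measurable_const.min (measurable_const.max (measurable_const.sub (hXσ n))))
  have hξ0 : ∀ n ω, 0 ≤ ξ n ω := fun n ω =>
    mul_nonneg (le_max_left _ _) (le_min zero_le_one (le_max_left _ _))
  have hξ1 : ∀ n ω, ξ n ω ≤ 1 := fun n ω =>
    mul_le_one₀ (max_le zero_le_one (min_le_left _ _))
      (le_min zero_le_one (le_max_left _ _)) (min_le_left _ _)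
  -- main pointwise argument
  have main : ∀ ω, 0 < T ω → (∀ n, ρ n ω < T ω) →
      Tendsto (fun n => ρ n ω) atTop (𝓝 (T ω)) →
      Tendsto (fun n => (P[f|𝒢 n]) ω) atTop (𝓝 (f ω)) →
      ((∀ t : ℝ≥0, Tendsto (fun n =>
            ξ n ω * (X (min (τ'' n ω) t) ω - X (min (σ' n ω) t) ω)) atTop
          (𝓝 ((X (T ω) ω - Xm (T ω) ω) * A.indicator (fun _ => (1 : ℝ)) ω
            * (if T ω ≤ t then (1 : ℝ) else 0)))) ∧
        (ω ∈ A → ∀ n : ℕ, N ≤ (n : ℝ≥0) →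
          ξ n ω * (X (τ'' n ω) ω - X (σ' n ω) ω) ≥ -(2 * C))) := by
    intro ω hTp hlt hlim hcond
    have hσlt : ∀ n, σ' n ω < T ω := fun n => lt_of_le_of_lt (min_le_left _ _) (hlt n)
    have hevTn : ∀ᶠ n : ℕ in atTop, T ω ≤ (n : ℝ≥0) := by
      obtain ⟨n₀, hn₀⟩ := exists_nat_ge (T ω)
      exact eventually_atTop.2 ⟨n₀, fun b hb => hn₀.trans (by exact_mod_cast hb)⟩
    have hσeq : ∀ᶠ n : ℕ in atTop, σ' n ω = ρ n ω :=
      hevTn.mono fun n hn => min_eq_left ((hlt n).le.trans hn)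
    have hσtend : Tendsto (fun n => σ' n ω) atTop (𝓝 (T ω)) :=
      hlim.congr' (hσeq.mono fun n hn => hn.symm)
    have hXσtend : Tendsto (fun n => X (σ' n ω) ω) atTop (𝓝 (Xm (T ω) ω)) :=
      (hll ω (T ω) hTp).comp
        (tendsto_nhdsWithin_iff.2 ⟨hσtend, Eventually.of_forall fun n => hσlt n⟩)
    have hXρtend : Tendsto (fun n => X (ρ n ω) ω) atTop (𝓝 (Xm (T ω) ω)) :=
      (hll ω (T ω) hTp).comp
        (tendsto_nhdsWithin_iff.2 ⟨hlim, Eventually.of_forall fun n => hlt n⟩)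
    have habs : Tendsto (fun n => |X (σ' n ω) ω|) atTop (𝓝 (|Xm (T ω) ω|)) := hXσtend.abs
    -- the sets B and A agree at ω
    have hB1iff : ω ∈ B1 ↔ T ω ≤ N := by
      rw [hB1def, Set.mem_iInter]
      constructor
      · intro h
        exact le_of_tendsto' hσtend fun n => h n
      · intro hTN n
        exact (hσlt n).le.trans hTN
    have hB2iff : ω ∈ B2 ↔ |Xm (T ω) ω| ≤ C := by
      rw [hB2def, Set.mem_iInter]
      constructor
      · intro h
        have h' : ∀ k : ℕ, |Xm (T ω) ω| ≤ C + 1 / ((k : ℝ) + 1) := by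
          intro k
          obtain ⟨n, hn⟩ := Set.mem_iUnion.1 (h k)
          simp only [Set.mem_iInter, Set.mem_setOf_eq] at hn
          refine le_of_tendsto habs ?_
          exact eventually_atTop.2 ⟨n, fun mm hm => (hn mm hm).le⟩
        have hlim0 : Tendsto (fun k : ℕ => C + 1 / ((k : ℝ) + 1)) atTop (𝓝 (C + 0)) :=
          tendsto_const_nhds.add tendsto_one_div_add_atTop_nhds_zero_nat
        rw [add_zero] at hlim0
        exact ge_of_tendsto' hlim0 h'
      · intro hle k
        have hlt' : |Xm (T ω) ω| < C + 1 / ((k : ℝ) + 1) :=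
          lt_of_le_of_lt hle (lt_add_of_pos_right _ (by positivity))
        have hev := habs.eventually_lt_const hlt'
        rw [eventually_atTop] at hev
        obtain ⟨n, hn⟩ := hev
        exact Set.mem_iUnion.2 ⟨n, Set.mem_iInter.2 fun mm =>
          Set.mem_iInter.2 fun hm => hn mm hm⟩
    have hBiffA : ω ∈ B ↔ ω ∈ A := by
      rw [hBdef, hA]
      constructor
      · rintro ⟨⟨h1, h2⟩, h3⟩
        exact ⟨hB1iff.1 h1, hB2iff.1 h2, h3⟩
      · rintro ⟨h1, h2, h3⟩
        exact ⟨⟨hB1iff.2 h1, hB2iff.2 h2⟩, h3⟩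
    -- convergence of the positions
    have hξtend : Tendsto (fun n => ξ n ω) atTop (𝓝 (A.indicator (fun _ => (1 : ℝ)) ω)) := by
      have hclamp : Tendsto (fun n => max 0 (min 1 ((P[f|𝒢 n]) ω))) atTop
          (𝓝 (max 0 (min 1 (f ω)))) :=
        tendsto_const_nhds.max (tendsto_const_nhds.min hcond)
      by_cases hωA : ω ∈ A
      · have hfω : f ω = 1 := Set.indicator_of_mem (hBiffA.2 hωA) _
        rw [hfω] at hclamp
        norm_num at hclamp
        have hmem := hA ▸ hωA
        obtain ⟨hTN, habsC, hΔ⟩ := hmem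
        have hXmle : Xm (T ω) ω ≤ C := (abs_le.1 habsC).2
        have hcut : Tendsto (fun n => min 1 (max 0 (C + 1 - X (σ' n ω) ω))) atTop
            (𝓝 (min 1 (max 0 (C + 1 - Xm (T ω) ω)))) :=
          tendsto_const_nhds.min (tendsto_const_nhds.max (tendsto_const_nhds.sub hXσtend))
        have hval : min 1 (max 0 (C + 1 - Xm (T ω) ω)) = 1 := by
          rw [max_eq_right (by linarith), min_eq_left (by linarith)]
        rw [hval] at hcut
        have := hclamp.mul hcut
        rw [mul_one] at this
        rwa [Set.indicator_of_mem hωA]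
      · have hfω : f ω = 0 := Set.indicator_of_notMem (fun hB => hωA (hBiffA.1 hB)) _
        rw [hfω] at hclamp
        norm_num at hclamp
        rw [Set.indicator_of_notMem hωA]
        refine squeeze_zero (fun n => hξ0 n ω) (fun n => ?_) hclamp
        exact mul_le_of_le_one_right (le_max_left _ _) (min_le_left _ _)
    -- convergence of the gains factor
    have hfac : ∀ t : ℝ≥0,
        Tendsto (fun n => X (min (τ'' n ω) t) ω - X (min (σ' n ω) t) ω) atTop
          (𝓝 ((X (T ω) ω - Xm (T ω) ω) * (if T ω ≤ t then (1 : ℝ) else 0))) := by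
      intro t
      rcases le_or_gt (T ω) t with hTt | hTt
      · rw [if_pos hTt, mul_one]
        have hev : ∀ᶠ n : ℕ in atTop,
            X (T ω) ω - X (ρ n ω) ω
              = X (min (τ'' n ω) t) ω - X (min (σ' n ω) t) ω := by
          filter_upwards [hevTn] with n hn
          have h1 : τ'' n ω = T ω := by
            simp only [hτ''def]
            rw [max_eq_right (hlt n).le, min_eq_left hn]
          have h2 : σ' n ω = ρ n ω := min_eq_left ((hlt n).le.trans hn)
          rw [h1, h2, min_eq_left hTt, min_eq_left ((hlt n).le.trans hTt)]
        exact (tendsto_const_nhds.sub hXρtend).congr' hev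
      · rw [if_neg (not_le.2 hTt), mul_zero]
        have hev : ∀ᶠ n : ℕ in atTop,
            (0 : ℝ) = X (min (τ'' n ω) t) ω - X (min (σ' n ω) t) ω := by
          filter_upwards [hevTn, hlim.eventually (eventually_gt_nhds hTt)] with n hn hgt
          have h1 : τ'' n ω = T ω := by
            simp only [hτ''def]
            rw [max_eq_right (hlt n).le, min_eq_left hn]
          have h2 : σ' n ω = ρ n ω := min_eq_left ((hlt n).le.trans hn)
          rw [h1, h2, min_eq_right hTt.le, min_eq_right hgt.le, sub_self]
        exact tendsto_const_nhds.congr' hev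
    constructor
    · intro t
      have := hξtend.mul (hfac t)
      convert this using 2
      ring
    · intro hωA n hn
      have hmem := hA ▸ hωA
      obtain ⟨hTN, habsC, hΔ⟩ := hmem
      have hTn : T ω ≤ (n : ℝ≥0) := hTN.trans hn
      have h1 : τ'' n ω = T ω := by
        simp only [hτ''def]
        rw [max_eq_right (hlt n).le, min_eq_left hTn]
      have hb : ξ n ω ≤ min 1 (max 0 (C + 1 - X (σ' n ω) ω)) :=
        mul_le_of_le_one_left (le_min zero_le_one (le_max_left _ _))
          (max_le zero_le_one (min_le_left _ _))
      have hy : -C ≤ X (T ω) ω := by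
        have := (abs_le.1 habsC).1
        linarith
      rw [h1]
      exact stmt16_aux_bound hC (hξ0 n ω) hb hy
  refine ⟨σ', τ'', ξ, hσst, hτst, fun n => ⟨n, fun ω => min_le_right _ _⟩,
    fun n ω => min_le_min (le_max_left _ _) le_rfl, hξmeas,
    fun n => Eventually.of_forall fun ω => ⟨hξ0 n ω, hξ1 n ω⟩, ?_, ?_⟩
  · intro t
    filter_upwards [hTpos, hρlt, hρlim, hLevy] with ω h1 h2 h3 h4
    exact (main ω h1 h2 h3 h4).1 t
  · filter_upwards [hTpos, hρlt, hρlim, hLevy] with ω h1 h2 h3 h4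
    exact (main ω h1 h2 h3 h4).2
end
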